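/- arXiv:1404.4378 — 5 statements merged into one kernel-verified Lean document; each statement's English description precedes it below -/
import Mathlib

section
/- Let 0 < d < 2r, and let x, y ∈ ℝ² with dist(x,y) = d. Let D₁ and D₂ be the two closed disks of radius r whose boundary circles each pass through both x and y, and let I = interior(D₁ ∩ D₂) be the open lens region. Then the diameter of the closure of I is strictly less than 2r. -/
open Set Metric

noncomputable section

abbrev Plane := EuclideanSpace ℝ (Fin 2)

set_option maxHeartbeats 1000000 in
/-- For 0 < d < 2r and x, y at distance d, if D₁, D₂ are the two closed radius-r
disks whose boundary circles pass through x and y, then the closure of the open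
lens I = int(D₁ ∩ D₂) has diameter strictly less than 2r. -/
theorem lens_diameter_lt (r d : ℝ) (hr : 0 < r) (hd : 0 < d) (hd2 : d < 2 * r)
    (x y c₁ c₂ : Plane) (hxy : dist x y = d)
    (hc₁x : dist c₁ x = r) (hc₁y : dist c₁ y = r)
    (hc₂x : dist c₂ x = r) (hc₂y : dist c₂ y = r)
    (hcc : c₁ ≠ c₂) :
    Metric.diam (closure (interior (closedBall c₁ r ∩ closedBall c₂ r))) < 2 * r := by
  set K := closedBall c₁ r ∩ closedBall c₂ r with hK
  have hKcl : IsClosed K := (isClosed_closedBall).inter (isClosed_closedBall)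
  have hKcpt : IsCompact K := (isCompact_closedBall c₁ r).inter_right isClosed_closedBall
  have hKne : K.Nonempty :=
    ⟨x, mem_closedBall.2 ((dist_comm x c₁).trans hc₁x).le,
        mem_closedBall.2 ((dist_comm x c₂).trans hc₂x).le⟩
  -- the diameter of K is attained
  obtain ⟨⟨p, q⟩, hpq, hmax⟩ :=
    (hKcpt.prod hKcpt).exists_isMaxOn (hKne.prod hKne)
      (continuous_dist.continuousOn : ContinuousOn (fun z : Plane × Plane => dist z.1 z.2) _)
  have hpK : p ∈ K := hpq.1
  have hqK : q ∈ K := hpq.2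
  have hdiam : Metric.diam K ≤ dist p q := by
    exact Metric.diam_le_of_forall_dist_le dist_nonneg
      fun a ha b hb => (isMaxOn_iff.mp hmax) (a, b) (Set.mk_mem_prod ha hb)
  have hlt : dist p q < 2 * r := by
    rcases lt_or_eq_of_le (by
      calc dist p q ≤ dist p c₁ + dist c₁ q := dist_triangle _ _ _
        _ ≤ r + r := add_le_add hpK.1 (by rw [dist_comm]; exact hqK.1)
        _ = 2 * r := by ring) with h | h
    · exact h
    · exfalso
      have h1 : dist p c₁ = r ∧ dist c₁ q = r := by
        have hp1 : dist p c₁ ≤ r := by simpa [dist_comm] using hpK.1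
        have hq1 : dist c₁ q ≤ r := by rw [dist_comm]; exact hqK.1
        constructor <;> nlinarith [dist_triangle p c₁ q]
      have h2 : dist p c₂ = r ∧ dist c₂ q = r := by
        have hp1 : dist p c₂ ≤ r := by simpa [dist_comm] using hpK.2
        have hq1 : dist c₂ q ≤ r := by rw [dist_comm]; exact hqK.2
        constructor <;> nlinarith [dist_triangle p c₂ q]
      have e1 : c₁ = midpoint ℝ p q :=
        eq_midpoint_of_dist_eq_half (by rw [h1.1, h]; ring)
          (by rw [h1.2, h]; ring)
      have e2 : c₂ = midpoint ℝ p q :=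
        eq_midpoint_of_dist_eq_half (by rw [h2.1, h]; ring)
          (by rw [h2.2, h]; ring)
      exact hcc (e1.trans e2.symm)
  calc Metric.diam (closure (interior K))
      ≤ Metric.diam K := by
        apply Metric.diam_mono _ hKcpt.isBounded
        exact (hKcl.closure_subset_iff.mpr interior_subset)
    _ ≤ dist p q := hdiam
    _ < 2 * r := hlt
end
end

section
/- Let σ : [0,s] → ℝ² be a 1-constrained curve (unit speed, C¹, piecewise C², ‖σ''‖ ≤ 1) whose image lies in a closed unit disk D. Then either the image of σ is entirely contained in the boundary circle ∂D, or σ(t) lies in the interior of D for all t ∈ (0,s). -/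
open Set Metric

open scoped RealInnerProductSpace

noncomputable section

def IsKConstrained (κ s : ℝ) (σ σ' σ'' : ℝ → Plane) : Prop :=
  0 ≤ s ∧
  (∀ t ∈ Icc (0:ℝ) s, HasDerivAt σ (σ' t) t) ∧
  ContinuousOn σ' (Icc 0 s) ∧
  (∀ t ∈ Icc (0:ℝ) s, ‖σ' t‖ = 1) ∧
  ∃ F : Finset ℝ, ∀ t ∈ Icc (0:ℝ) s, t ∉ F →
    HasDerivAt σ' (σ'' t) t ∧ ‖σ'' t‖ ≤ κ

/-- A continuous function on `[a,b]` with nonnegative derivative off a finite set is monotone. -/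
lemma monotoneOn_of_finite_exceptions (F : Finset ℝ) :
    ∀ (a b : ℝ) (g h : ℝ → ℝ), ContinuousOn g (Icc a b) →
    (∀ t ∈ Ioo a b, t ∉ F → HasDerivAt g (h t) t ∧ 0 ≤ h t) →
    MonotoneOn g (Icc a b) := by
  induction F using Finset.induction_on with
  | empty =>
    intro a b g h hc hd
    apply monotoneOn_of_hasDerivWithinAt_nonneg (f' := h) (convex_Icc a b) hc
    · intro x hx
      rw [interior_Icc] at hx
      exact ((hd x hx (by simp)).1).hasDerivWithinAt
    · intro x hx
      rw [interior_Icc] at hx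
      exact (hd x hx (by simp)).2
  | @insert p G hpG IH =>
    intro a b g h hc hd
    by_cases hp' : p ∈ Ioo a b
    · obtain ⟨hap, hpb⟩ := hp'
      have m1 : MonotoneOn g (Icc a p) := by
        refine IH a p g h (hc.mono (Icc_subset_Icc le_rfl hpb.le)) ?_
        intro t ht htG
        refine hd t ⟨ht.1, ht.2.trans hpb⟩ ?_
        simp only [Finset.mem_insert, not_or]
        exact ⟨ht.2.ne, htG⟩
      have m2 : MonotoneOn g (Icc p b) := by
        refine IH p b g h (hc.mono (Icc_subset_Icc hap.le le_rfl)) ?_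
        intro t ht htG
        refine hd t ⟨hap.trans ht.1, ht.2⟩ ?_
        simp only [Finset.mem_insert, not_or]
        exact ⟨ht.1.ne', htG⟩
      intro x hx y hy hxy
      rcases le_total y p with h1 | h1
      · exact m1 ⟨hx.1, hxy.trans h1⟩ ⟨hy.1, h1⟩ hxy
      rcases le_total x p with h2 | h2
      · exact (m1 ⟨hx.1, h2⟩ ⟨hap.le, le_rfl⟩ h2).trans
          (m2 ⟨le_rfl, hpb.le⟩ ⟨h1, hy.2⟩ h1)
      · exact m2 ⟨h2, hx.2⟩ ⟨h1, hy.2⟩ hxy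
    · refine IH a b g h hc ?_
      intro t ht htG
      refine hd t ht ?_
      simp only [Finset.mem_insert, not_or]
      exact ⟨fun he => hp' (he ▸ ht), htG⟩

/-- A 1-constrained curve lying in a closed unit disk D either lies entirely in
the boundary circle ∂D, or lies in the interior of D at all interior times. -/
theorem curve_in_unit_disk (s : ℝ) (σ σ' σ'' : ℝ → Plane) (c : Plane)
    (hσ : IsKConstrained 1 s σ σ' σ'')
    (hD : ∀ t ∈ Icc (0:ℝ) s, σ t ∈ closedBall c 1) :
    (∀ t ∈ Icc (0:ℝ) s, dist (σ t) c = 1) ∨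
    (∀ t ∈ Ioo (0:ℝ) s, dist (σ t) c < 1) := by
  obtain ⟨hs, hder, hcont', hunit, F, hF⟩ := hσ
  by_cases H : ∃ t₀ ∈ Ioo (0:ℝ) s, dist (σ t₀) c = 1
  · left
    obtain ⟨t₀, ht₀, ht₀1⟩ := H
    set f : ℝ → ℝ := fun t => ⟪σ t - c, σ t - c⟫ with hf_def
    set g : ℝ → ℝ := fun t => 2 * ⟪σ' t, σ t - c⟫ with hg_def
    -- norm bound
    have hnorm : ∀ t ∈ Icc (0:ℝ) s, ‖σ t - c‖ ≤ 1 := by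
      intro t ht
      have := hD t ht
      rwa [mem_closedBall, dist_eq_norm] at this
    -- f has derivative g on Icc
    have hfd : ∀ t ∈ Icc (0:ℝ) s, HasDerivAt f (g t) t := by
      intro t ht
      have hu : HasDerivAt (fun t => σ t - c) (σ' t) t := (hder t ht).sub_const c
      have := hu.inner ℝ hu
      refine this.congr_deriv ?_
      rw [real_inner_comm (σ' t) (σ t - c)]
      simp [hg_def]
      ring
    -- continuity of f and g on Icc
    have hσc : ContinuousOn σ (Icc 0 s) := fun t ht =>
      (hder t ht).continuousAt.continuousWithinAt
    have hfc : ContinuousOn f (Icc 0 s) := fun t ht =>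
      ((hfd t ht).continuousAt).continuousWithinAt
    have hgc : ContinuousOn g (Icc 0 s) :=
      continuousOn_const.mul (hcont'.inner (hσc.sub continuousOn_const))
    -- g is monotone on Icc
    have hmono : MonotoneOn g (Icc 0 s) := by
      refine monotoneOn_of_finite_exceptions F 0 s g
        (fun t => 2 * (⟪σ t - c, σ'' t⟫ + ⟪σ' t, σ' t⟫)) hgc ?_
      intro t ht htF
      have ht' : t ∈ Icc (0:ℝ) s := Ioo_subset_Icc_self ht
      obtain ⟨hd2, hb2⟩ := hF t ht' htF
      have hu : HasDerivAt (fun t => σ t - c) (σ' t) t := (hder t ht').sub_const c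
      constructor
      · show HasDerivAt g (2 * (⟪σ t - c, σ'' t⟫ + ⟪σ' t, σ' t⟫)) t
        rw [real_inner_comm (σ'' t) (σ t - c), add_comm ⟪σ'' t, σ t - c⟫]
        exact (hd2.inner ℝ hu).const_mul (2:ℝ)
      · have h1 : ⟪σ' t, σ' t⟫ = 1 := by
          rw [real_inner_self_eq_norm_sq, hunit t ht']; norm_num
        have h2 : (-1:ℝ) ≤ ⟪σ t - c, σ'' t⟫ := by
          have := abs_real_inner_le_norm (σ t - c) (σ'' t)
          have hn := hnorm t ht'
          have h3 : ‖σ t - c‖ * ‖σ'' t‖ ≤ 1 :=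
            mul_le_one₀ hn (norm_nonneg _) hb2
          have := (abs_le.mp ((abs_real_inner_le_norm (σ t - c) (σ'' t)).trans h3)).1
          linarith
        show (0:ℝ) ≤ 2 * (⟪σ t - c, σ'' t⟫ + ⟪σ' t, σ' t⟫)
        linarith
    -- f ≤ 1 on Icc, f t₀ = 1
    have hfle : ∀ t ∈ Icc (0:ℝ) s, f t ≤ 1 := by
      intro t ht
      have := hnorm t ht
      have h0 : (0:ℝ) ≤ ‖σ t - c‖ := norm_nonneg _
      simp only [hf_def, real_inner_self_eq_norm_sq]
      nlinarith
    have hft₀ : f t₀ = 1 := by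
      simp only [hf_def, real_inner_self_eq_norm_sq, ← dist_eq_norm, ht₀1]
      norm_num
    obtain ⟨ht₀0, ht₀s⟩ := ht₀
    -- main claim: f ≡ 1
    have key : ∀ a ∈ Icc (0:ℝ) s, f a = 1 := by
      intro a ha
      rcases lt_trichotomy a t₀ with hlt | heq | hgt
      · by_contra hne
        have hfa : f a < 1 := lt_of_le_of_ne (hfle a ha) hne
        obtain ⟨ξ, hξ, hξval⟩ := exists_hasDerivAt_eq_slope f g hlt
          (hfc.mono (Icc_subset_Icc ha.1 ht₀s.le))
          (fun x hx => hfd x ⟨ha.1.trans hx.1.le, hx.2.le.trans ht₀s.le⟩)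
        obtain ⟨η, hη, hηval⟩ := exists_hasDerivAt_eq_slope f g ht₀s
          (hfc.mono (Icc_subset_Icc ht₀0.le le_rfl))
          (fun x hx => hfd x ⟨ht₀0.le.trans hx.1.le, hx.2.le⟩)
        have hgξ : 0 < g ξ := by
          rw [hξval, hft₀]
          apply div_pos <;> linarith
        have hgη : g η ≤ 0 := by
          rw [hηval, hft₀]
          apply div_nonpos_of_nonpos_of_nonneg
          · have := hfle s ⟨hs, le_rfl⟩; linarith
          · linarith [hη.2]
        have hle : g ξ ≤ g η :=
          hmono ⟨ha.1.trans hξ.1.le, hξ.2.le.trans ht₀s.le⟩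
            ⟨ht₀0.le.trans hη.1.le, hη.2.le⟩ (hξ.2.trans hη.1).le
        linarith
      · rw [heq]; exact hft₀
      · by_contra hne
        have hfa : f a < 1 := lt_of_le_of_ne (hfle a ha) hne
        obtain ⟨ξ, hξ, hξval⟩ := exists_hasDerivAt_eq_slope f g hgt
          (hfc.mono (Icc_subset_Icc ht₀0.le ha.2))
          (fun x hx => hfd x ⟨ht₀0.le.trans hx.1.le, hx.2.le.trans ha.2⟩)
        obtain ⟨η, hη, hηval⟩ := exists_hasDerivAt_eq_slope f g ht₀0
          (hfc.mono (Icc_subset_Icc le_rfl ht₀s.le))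
          (fun x hx => hfd x ⟨hx.1.le, hx.2.le.trans ht₀s.le⟩)
        have hgξ : g ξ < 0 := by
          rw [hξval, hft₀]
          apply div_neg_of_neg_of_pos <;> linarith
        have hgη : 0 ≤ g η := by
          rw [hηval, hft₀]
          apply div_nonneg
          · have := hfle 0 ⟨le_rfl, hs⟩; linarith
          · linarith [hη.1]
        have hle : g η ≤ g ξ :=
          hmono ⟨hη.1.le, hη.2.le.trans ht₀s.le⟩
            ⟨ht₀0.le.trans hξ.1.le, hξ.2.le.trans ha.2⟩ (hη.2.trans hξ.1).le
        linarith
    intro t ht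
    have := key t ht
    have hd0 : (0:ℝ) ≤ dist (σ t) c := dist_nonneg
    simp only [hf_def, real_inner_self_eq_norm_sq, ← dist_eq_norm] at this
    nlinarith
  · right
    intro t ht
    exact lt_of_le_of_ne
      (by have := hD t (Ioo_subset_Icc_self ht); rwa [mem_closedBall] at this)
      (fun h => H ⟨t, ht, h⟩)
end
end

section
/- Let r > 0 and let B = {(x,y) ∈ ℝ² : -r < x < r, y ≥ 0}. Let C be a circle of radius r centered on the negative y-axis. There is no κ-constrained plane curve σ : [0,s] → B with κ = 1/r such that σ(0) and σ(s) lie on the x-axis and on C, and some point of the image of σ lies strictly above C (i.e., outside the disk bounded by C). -/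
open Set Metric
open scoped InnerProductSpace

noncomputable section

lemma plane_norm_sq (v : Plane) : ‖v‖ ^ 2 = v 0 ^ 2 + v 1 ^ 2 := by
  rw [EuclideanSpace.norm_eq, Fin.sum_univ_two, Real.sq_sqrt (by positivity)]
  simp [sq_abs]

lemma plane_inner_self (v : Plane) : ⟪v, v⟫_ℝ = v 0 ^ 2 + v 1 ^ 2 := by
  rw [real_inner_self_eq_norm_sq, plane_norm_sq]

lemma plane_dist_sq (p w : Plane) :
    dist p w ^ 2 = (p 0 - w 0) ^ 2 + (p 1 - w 1) ^ 2 := by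
  rw [dist_eq_norm, plane_norm_sq]
  simp

lemma mono_aux (F : Finset ℝ) : ∀ (f f' : ℝ → ℝ) (a b : ℝ), a ≤ b →
    ContinuousOn f (Icc a b) →
    (∀ x ∈ Ioo a b, x ∉ F → HasDerivAt f (f' x) x ∧ 0 ≤ f' x) → f a ≤ f b := by
  induction F using Finset.induction_on with
  | empty =>
    intro f f' a b hab hc hd
    have hm : MonotoneOn f (Icc a b) := by
      apply monotoneOn_of_deriv_nonneg (convex_Icc a b) hc
      · intro x hx
        rw [interior_Icc] at hx
        exact ((hd x hx (by simp)).1.differentiableAt).differentiableWithinAt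
      · intro x hx
        rw [interior_Icc] at hx
        rw [(hd x hx (by simp)).1.deriv]
        exact (hd x hx (by simp)).2
    exact hm (left_mem_Icc.2 hab) (right_mem_Icc.2 hab) hab
  | @insert c F hcF ih =>
    intro f f' a b hab hc hd
    by_cases hm : c ∈ Ioo a b
    · have h1 : f a ≤ f c := by
        refine ih f f' a c hm.1.le (hc.mono (Icc_subset_Icc le_rfl hm.2.le)) ?_
        intro x hx hxF
        exact hd x ⟨hx.1, hx.2.trans hm.2⟩ (by simp [Finset.mem_insert, hxF, ne_of_lt hx.2])
      have h2 : f c ≤ f b := by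
        refine ih f f' c b hm.2.le (hc.mono (Icc_subset_Icc hm.1.le le_rfl)) ?_
        intro x hx hxF
        exact hd x ⟨hm.1.trans hx.1, hx.2⟩
          (by simp [Finset.mem_insert, hxF, (ne_of_gt hx.1)])
      exact h1.trans h2
    · refine ih f f' a b hab hc ?_
      intro x hx hxF
      refine hd x hx ?_
      simp only [Finset.mem_insert]
      rintro (rfl | h)
      exacts [hm hx, hxF h]

lemma neg_sq_cancel {a b : ℝ} (h : a ^ 2 = b ^ 2) (ha : a < 0) (hb : b < 0) : a = b := by
  nlinarith

/-- Fundamental Lemma: no (1/r)-constrained curve contained in the band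
B = {(x,y) : -r < x < r, y ≥ 0}, with endpoints on the x-axis and on a radius-r
circle C centered on the negative y-axis, can have a point strictly above C. -/
theorem no_curve_escapes_band (r s : ℝ) (hr : 0 < r)
    (σ σ' σ'' : ℝ → Plane) (c : Plane)
    (hσ : IsKConstrained (1 / r) s σ σ' σ'')
    (hband : ∀ t ∈ Icc (0:ℝ) s, -r < (σ t) 0 ∧ (σ t) 0 < r ∧ 0 ≤ (σ t) 1)
    (hcenter₀ : c 0 = 0) (hcenter₁ : c 1 < 0)
    (hx0 : (σ 0) 1 = 0) (hxs : (σ s) 1 = 0)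
    (hC0 : dist (σ 0) c = r) (hCs : dist (σ s) c = r)
    (habove : ∃ t ∈ Icc (0:ℝ) s, r < dist (σ t) c) :
    False := by
  obtain ⟨hs0, hderiv, hσ'cont, hnorm, F, hF⟩ := hσ
  -- continuity of the curve and its coordinates
  have hσc : ContinuousOn σ (Icc 0 s) := fun t ht =>
    (hderiv t ht).continuousAt.continuousWithinAt
  have hXc : ContinuousOn (fun t => σ t 0) (Icc 0 s) :=
    (continuous_apply (0 : Fin 2)).comp_continuousOn ((PiLp.continuous_ofLp (p := 2) (β := fun _ : Fin 2 => ℝ)).comp_continuousOn hσc)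
  have hYc : ContinuousOn (fun t => σ t 1) (Icc 0 s) :=
    (continuous_apply (1 : Fin 2)).comp_continuousOn ((PiLp.continuous_ofLp (p := 2) (β := fun _ : Fin 2 => ℝ)).comp_continuousOn hσc)
  -- band facts
  have hXsq : ∀ t ∈ Icc (0:ℝ) s, (σ t 0) ^ 2 < r ^ 2 := by
    intro t ht
    have h1 := (hband t ht).1
    have h2 := (hband t ht).2.1
    nlinarith
  -- the height function
  obtain ⟨h, hhdef⟩ : ∃ h : ℝ → ℝ, h = fun t => σ t 1 - Real.sqrt (r ^ 2 - (σ t 0) ^ 2) :=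
    ⟨_, rfl⟩
  have hhc : ContinuousOn h (Icc 0 s) := by
    rw [hhdef]
    exact hYc.sub (Real.continuous_sqrt.comp_continuousOn (continuousOn_const.sub (hXc.pow 2)))
  obtain ⟨tstar, htsmem, htmax⟩ :=
    isCompact_Icc.exists_isMaxOn (nonempty_Icc.2 hs0) hhc
  obtain ⟨hstar, hstardef⟩ : ∃ x : ℝ, x = h tstar := ⟨_, rfl⟩
  have htmax' : ∀ t ∈ Icc (0:ℝ) s, h t ≤ hstar := fun t ht => by
    rw [hstardef]; exact htmax ht
  -- endpoints
  have e0 : (σ 0 0) ^ 2 + (c 1) ^ 2 = r ^ 2 := by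
    have h1 := plane_dist_sq (σ 0) c
    rw [hC0, hcenter₀, hx0] at h1
    nlinarith
  have h0mem : (0:ℝ) ∈ Icc (0:ℝ) s := ⟨le_rfl, hs0⟩
  have hsmem : s ∈ Icc (0:ℝ) s := ⟨hs0, le_rfl⟩
  have h0 : h 0 = c 1 := by
    have hsq : Real.sqrt (r ^ 2 - (σ 0 0) ^ 2) = -c 1 := by
      have h2 : r ^ 2 - (σ 0 0) ^ 2 = (-c 1) ^ 2 := by nlinarith
      rw [h2, Real.sqrt_sq (by linarith)]
    simp only [hhdef, hx0, hsq]
    ring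
  -- the point above C
  obtain ⟨t₁, ht₁mem, ht₁⟩ := habove
  have ht₁' : c 1 < h t₁ := by
    have hb := hband t₁ ht₁mem
    have hsq : r ^ 2 < (σ t₁ 0) ^ 2 + (σ t₁ 1 - c 1) ^ 2 := by
      have h1 := plane_dist_sq (σ t₁) c
      rw [hcenter₀] at h1
      nlinarith [dist_nonneg (x := σ t₁) (y := c)]
    have hpos : 0 < σ t₁ 1 - c 1 := by linarith [hb.2.2]
    have : Real.sqrt (r ^ 2 - (σ t₁ 0) ^ 2) < σ t₁ 1 - c 1 := by
      rw [Real.sqrt_lt' hpos]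
      nlinarith
    simp only [hhdef]
    linarith
  have hstar_gt : c 1 < hstar := lt_of_lt_of_le ht₁' (htmax' t₁ ht₁mem)
  -- tstar is interior
  have hts0 : (0:ℝ) < tstar := by
    rcases (htsmem.1).lt_or_eq with h1 | h1
    · exact h1
    · exfalso
      rw [hstardef, ← h1, h0] at hstar_gt
      exact lt_irrefl _ hstar_gt
  have es : (σ s 0) ^ 2 + (c 1) ^ 2 = r ^ 2 := by
    have h1 := plane_dist_sq (σ s) c
    rw [hCs, hcenter₀, hxs] at h1
    nlinarith
  have hsval : h s = c 1 := by
    have hsq : Real.sqrt (r ^ 2 - (σ s 0) ^ 2) = -c 1 := by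
      have h2 : r ^ 2 - (σ s 0) ^ 2 = (-c 1) ^ 2 := by nlinarith
      rw [h2, Real.sqrt_sq (by linarith)]
    simp only [hhdef, hxs, hsq]
    ring
  have htss : tstar < s := by
    rcases (htsmem.2).lt_or_eq with h1 | h1
    · exact h1
    · exfalso
      rw [hstardef, h1, hsval] at hstar_gt
      exact lt_irrefl _ hstar_gt
  -- geometry at tstar
  have hsqpos : 0 < Real.sqrt (r ^ 2 - (σ tstar 0) ^ 2) :=
    Real.sqrt_pos.2 (by linarith [hXsq tstar htsmem])
  have htsqrt : σ tstar 1 - hstar = Real.sqrt (r ^ 2 - (σ tstar 0) ^ 2) := by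
    rw [hstardef]; simp only [hhdef]; ring
  have hYtstar : hstar < σ tstar 1 := by linarith
  -- the touching circle center
  obtain ⟨q, hq0, hq1⟩ : ∃ q : Plane, q 0 = 0 ∧ q 1 = hstar :=
    ⟨(WithLp.equiv 2 (Fin 2 → ℝ)).symm ![0, hstar], rfl, rfl⟩
  -- points with y ≥ hstar lie inside the disk of radius r around q
  have hinside : ∀ t ∈ Icc (0:ℝ) s, hstar ≤ σ t 1 → dist (σ t) q ^ 2 ≤ r ^ 2 := by
    intro t ht hYt
    have hht : σ t 1 - Real.sqrt (r ^ 2 - (σ t 0) ^ 2) ≤ hstar := by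
      simpa only [hhdef] using htmax' t ht
    have h1 : σ t 1 - hstar ≤ Real.sqrt (r ^ 2 - (σ t 0) ^ 2) := by linarith
    have hnn : 0 ≤ σ t 1 - hstar := by linarith
    have h2 : (σ t 1 - hstar) ^ 2 ≤ r ^ 2 - (σ t 0) ^ 2 := by
      calc (σ t 1 - hstar) ^ 2 ≤ Real.sqrt (r ^ 2 - (σ t 0) ^ 2) ^ 2 :=
            pow_le_pow_left₀ hnn h1 2
        _ = r ^ 2 - (σ t 0) ^ 2 := Real.sq_sqrt (by linarith [hXsq t ht])
    rw [plane_dist_sq, hq0, hq1, sub_zero]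
    linarith
  have htouch : dist (σ tstar) q ^ 2 = r ^ 2 := by
    rw [plane_dist_sq, hq0, hq1, htsqrt, Real.sq_sqrt (by linarith [hXsq tstar htsmem])]
    ring
  -- squared distance function and half its derivative
  obtain ⟨g, hgdef⟩ : ∃ g : ℝ → ℝ, g = fun t => ⟪σ t - q, σ t - q⟫_ℝ := ⟨_, rfl⟩
  have g_eq_dist : ∀ t, g t = dist (σ t) q ^ 2 := by
    intro t
    rw [hgdef]
    simp only [plane_inner_self, plane_dist_sq]
    simp
  obtain ⟨G, hGdef⟩ : ∃ G : ℝ → ℝ, G = fun t => ⟪σ t - q, σ' t⟫_ℝ := ⟨_, rfl⟩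
  have hGc : ContinuousOn G (Icc 0 s) := by
    rw [hGdef]
    exact (hσc.sub continuousOn_const).inner hσ'cont
  have hg' : ∀ t ∈ Icc (0:ℝ) s, HasDerivAt g (2 * G t) t := by
    intro t ht
    have h1 := (hderiv t ht).sub_const q
    have h2 := HasDerivAt.inner ℝ h1 h1
    rw [hgdef, hGdef]
    refine h2.congr_deriv ?_
    rw [real_inner_comm (σ t - q) (σ' t)]
    ring
  have key : ∀ A, 0 ≤ A → A < tstar →
      (∀ t, A ≤ t → t ≤ tstar → hstar ≤ σ t 1) → dist (σ A) q ^ 2 = r ^ 2 := by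
    intro A hA0 hAt hYA
    have hcY : ContinuousAt (fun u => σ u 1) tstar :=
      (continuous_apply (1 : Fin 2)).continuousAt.comp ((PiLp.continuous_ofLp (p := 2) (β := fun _ : Fin 2 => ℝ)).continuousAt.comp (hderiv tstar htsmem).continuousAt)
    have hev : {u | hstar < σ u 1} ∈ nhds tstar := hcY (Ioi_mem_nhds hYtstar)
    obtain ⟨δ, hδpos, hball⟩ := Metric.mem_nhds_iff.1 hev
    obtain ⟨b, htb, hbs, hbY⟩ : ∃ b, tstar < b ∧ b ≤ s ∧
        ∀ t ∈ Icc tstar b, hstar ≤ σ t 1 := by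
      refine ⟨min (tstar + δ/2) s, lt_min (by linarith) htss, min_le_right _ _, ?_⟩
      intro t ht
      have h1 : t - tstar ≤ δ/2 := by
        have h2 := le_trans ht.2 (min_le_left (tstar + δ/2) s)
        linarith
      have h2 : dist t tstar < δ := by
        rw [Real.dist_eq, abs_of_nonneg (by linarith [ht.1])]
        linarith
      exact le_of_lt (hball h2)
    have hAmem : A ∈ Icc (0:ℝ) s := ⟨hA0, hAt.le.trans htsmem.2⟩
    have hsub : Icc A b ⊆ Icc 0 s := Icc_subset_Icc hA0 hbs
    have hgle : ∀ x ∈ Icc A b, g x ≤ g tstar := by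
      intro x hx
      rw [g_eq_dist, g_eq_dist, htouch]
      rcases le_total x tstar with hc | hc
      · exact hinside x (hsub hx) (hYA x hx.1 hc)
      · exact hinside x (hsub hx) (hbY x ⟨hc, hx.2⟩)
    have hG0 : G tstar = 0 := by
      have hloc : IsLocalMax g tstar :=
        Filter.eventually_of_mem (Icc_mem_nhds hAt htb) hgle
      have h2 := hloc.hasDerivAt_eq_zero (hg' tstar htsmem)
      linarith
    have hGnp : ∀ t, A ≤ t → t ≤ tstar → G t ≤ 0 := by
      intro t h1 h2
      have hder : ∀ x ∈ Ioo t tstar, x ∉ F →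
          HasDerivAt G ((fun x => ⟪σ x - q, σ'' x⟫_ℝ + ⟪σ' x, σ' x⟫_ℝ) x) x ∧
            0 ≤ (fun x => ⟪σ x - q, σ'' x⟫_ℝ + ⟪σ' x, σ' x⟫_ℝ) x := by
        intro x hx hxF
        have hxmem : x ∈ Icc (0:ℝ) s :=
          ⟨(hA0.trans h1).trans hx.1.le, hx.2.le.trans htsmem.2⟩
        obtain ⟨hd2, hb2⟩ := hF x hxmem hxF
        constructor
        · rw [hGdef]
          exact HasDerivAt.inner ℝ ((hderiv x hxmem).sub_const q) hd2
        · have hn1 : ⟪σ' x, σ' x⟫_ℝ = 1 := by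
            rw [real_inner_self_eq_norm_sq, hnorm x hxmem]; norm_num
          have hYx : hstar ≤ σ x 1 := hYA x (h1.trans hx.1.le) hx.2.le
          have hg2 : dist (σ x) q ^ 2 ≤ r ^ 2 := hinside x hxmem hYx
          have hnq : ‖σ x - q‖ ≤ r := by
            rw [← dist_eq_norm]
            exact le_of_sq_le_sq hg2 hr.le
          have hinner : -(‖σ x - q‖ * ‖σ'' x‖) ≤ ⟪σ x - q, σ'' x⟫_ℝ :=
            (neg_le_neg (abs_real_inner_le_norm _ _)).trans (neg_abs_le _)
          have hmul : ‖σ x - q‖ * ‖σ'' x‖ ≤ r * (1 / r) :=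
            mul_le_mul hnq hb2 (norm_nonneg _) hr.le
          have hr1 : r * (1 / r) = 1 := by field_simp
          simp only
          linarith
      have hmono := mono_aux F G _ t tstar h2
        (hGc.mono (Icc_subset_Icc (hA0.trans h1) htsmem.2)) hder
      rw [hG0] at hmono
      exact hmono
    have hsub2 : Icc A tstar ⊆ Icc (0:ℝ) s := Icc_subset_Icc hA0 htsmem.2
    have hanti : AntitoneOn g (Icc A tstar) := by
      apply antitoneOn_of_deriv_nonpos (convex_Icc A tstar)
      · exact fun x hx => (hg' x (hsub2 hx)).continuousAt.continuousWithinAt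
      · intro x hx
        rw [interior_Icc] at hx
        exact (hg' x (hsub2 (Ioo_subset_Icc_self hx))).differentiableAt.differentiableWithinAt
      · intro x hx
        rw [interior_Icc] at hx
        rw [(hg' x (hsub2 (Ioo_subset_Icc_self hx))).deriv]
        have := hGnp x hx.1.le hx.2.le
        linarith
    have h5 : g tstar ≤ g A :=
      hanti (left_mem_Icc.2 hAt.le) (right_mem_Icc.2 hAt.le) hAt.le
    have h6 : g A ≤ g tstar := by
      rw [g_eq_dist, g_eq_dist, htouch]
      exact hinside A hAmem (hYA A le_rfl hAt.le)
    have h7 : g A = g tstar := le_antisymm h6 h5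
    rw [g_eq_dist, g_eq_dist, htouch] at h7
    exact h7
  rcases le_or_gt 0 hstar with hcase | hcase
  · -- the level hstar is reached from y = 0 : last crossing point A
    obtain ⟨A, hAmemS, hAYle, hAub⟩ : ∃ A, A ∈ Icc (0:ℝ) tstar ∧ σ A 1 ≤ hstar ∧
        ∀ t, t ∈ Icc (0:ℝ) tstar → σ t 1 ≤ hstar → t ≤ A := by
      have hScl : IsClosed (Icc (0:ℝ) tstar ∩ (fun t => σ t 1) ⁻¹' Iic hstar) :=
        ((hYc.mono (Icc_subset_Icc le_rfl htsmem.2)).preimage_isClosed_of_isClosed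
          isClosed_Icc isClosed_Iic)
      have hS0 : (0:ℝ) ∈ Icc (0:ℝ) tstar ∩ (fun t => σ t 1) ⁻¹' Iic hstar := by
        refine ⟨⟨le_rfl, hts0.le⟩, ?_⟩
        simp only [mem_preimage, mem_Iic, hx0]
        exact hcase
      have hSbdd : BddAbove (Icc (0:ℝ) tstar ∩ (fun t => σ t 1) ⁻¹' Iic hstar) :=
        BddAbove.mono inter_subset_left bddAbove_Icc
      have hmem := hScl.csSup_mem ⟨0, hS0⟩ hSbdd
      exact ⟨_, hmem.1, hmem.2, fun t ht hYt => le_csSup hSbdd ⟨ht, hYt⟩⟩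
    have hYgt : ∀ t, A < t → t ≤ tstar → hstar < σ t 1 := by
      intro t h1 h2
      by_contra hle
      push_neg at hle
      exact absurd (hAub t ⟨(hAmemS.1.trans h1.le), h2⟩ hle) (not_le.2 h1)
    have hAlt : A < tstar :=
      lt_of_le_of_ne hAmemS.2 (fun he => by rw [he] at hAYle; linarith)
    have hYAeq : σ A 1 = hstar := by
      rcases hAYle.lt_or_eq with hlt | heq
      · exfalso
        have hivt := intermediate_value_Icc hAlt.le
          ((hYc.mono (Icc_subset_Icc hAmemS.1 htsmem.2)))
        obtain ⟨u, hu, hYu⟩ := hivt ⟨hlt.le, hYtstar.le⟩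
        have hune : u ≠ A := by
          intro he
          rw [he] at hYu
          simp only at hYu
          linarith
        have := hYgt u (lt_of_le_of_ne hu.1 (Ne.symm hune)) hu.2
        simp only at hYu
        linarith
      · exact heq
    have hkey := key A hAmemS.1 hAlt ?_
    · rw [plane_dist_sq, hq0, hq1, hYAeq, sub_zero, sub_self] at hkey
      have hXA := hXsq A ⟨hAmemS.1, hAlt.le.trans htsmem.2⟩
      simp only [ne_eq, OfNat.ofNat_ne_zero, not_false_eq_true, zero_pow] at hkey
      linarith
    · intro t h1 h2
      rcases eq_or_lt_of_le h1 with he | hlt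
      · rw [← he, hYAeq]
      · exact (hYgt t hlt h2).le
  · -- hstar < 0 : use A = 0
    have hkey := key 0 le_rfl hts0 (fun t h1 h2 =>
      le_of_lt (lt_of_lt_of_le hcase (hband t ⟨h1, h2.trans htsmem.2⟩).2.2))
    rw [plane_dist_sq, hq0, hq1, hx0, sub_zero, zero_sub] at hkey
    have h8 : (-hstar) ^ 2 = c 1 ^ 2 := by linarith
    have h9 : hstar ^ 2 = c 1 ^ 2 := by
      rw [← h8]; ring
    have h10 : hstar = c 1 := neg_sq_cancel h9 hcase hcenter₁
    linarith
end
end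

section
/- Let x, y ∈ ℝ² with 0 < dist(x,y) < 2r, and let I be the open lens given by the intersection of the interiors of the two radius-r disks D₁, D₂ whose boundaries pass through x and y. Then any κ-constrained curve (κ = 1/r) from x to y whose image lies in cl(I) is an embedded (injective on (0,s)) curve. -/
open Set Metric

noncomputable section

open Real intervalIntegral

set_option maxHeartbeats 1000000

local notation "⟪" x ", " y "⟫" => @inner ℝ _ _ x y

/-- Lipschitz estimate from a derivative bound on the open interval. -/
lemma lip_base {E : Type*} [NormedAddCommGroup E] [NormedSpace ℝ E]
    (f f' : ℝ → E) (C a b : ℝ) (hC : 0 ≤ C) (hab : a ≤ b)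
    (hc : ContinuousOn f (Icc a b))
    (hd : ∀ t ∈ Ioo a b, HasDerivAt f (f' t) t)
    (hbd : ∀ t ∈ Ioo a b, ‖f' t‖ ≤ C) :
    ‖f b - f a‖ ≤ C * (b - a) := by
  rcases eq_or_lt_of_le hab with rfl | hlt
  · simp
  have key : ∀ y ∈ Ioo a b, ‖f b - f y‖ ≤ C * (b - a) := by
    intro y hy
    have h1 : ∀ x ∈ Icc y b, ‖f x - f y‖ ≤ C * (x - y) :=
      norm_image_sub_le_of_norm_deriv_right_le_segment
        (hc.mono (Icc_subset_Icc hy.1.le le_rfl))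
        (fun x hx => (hd x ⟨lt_of_lt_of_le hy.1 hx.1, hx.2⟩).hasDerivWithinAt)
        (fun x hx => hbd x ⟨lt_of_lt_of_le hy.1 hx.1, hx.2⟩)
    calc ‖f b - f y‖ ≤ C * (b - y) := h1 b ⟨hy.2.le, le_rfl⟩
      _ ≤ C * (b - a) := by nlinarith [hy.1]
  have ha_cl : a ∈ closure (Ioo a b) := by
    rw [closure_Ioo hlt.ne]; exact ⟨le_rfl, hab⟩
  have hne : (nhdsWithin a (Ioo a b)).NeBot := mem_closure_iff_nhdsWithin_neBot.1 ha_cl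
  have hca : Filter.Tendsto f (nhdsWithin a (Ioo a b)) (nhds (f a)) :=
    ((hc a ⟨le_rfl, hab⟩).mono Ioo_subset_Icc_self).tendsto
  have hten : Filter.Tendsto (fun y => ‖f b - f y‖) (nhdsWithin a (Ioo a b))
      (nhds ‖f b - f a‖) := (Filter.Tendsto.sub tendsto_const_nhds hca).norm
  refine le_of_tendsto hten ?_
  filter_upwards [self_mem_nhdsWithin] with y hy using key y hy

/-- Lipschitz estimate from a derivative bound off a finite set. -/
lemma lip_except {E : Type*} [NormedAddCommGroup E] [NormedSpace ℝ E]
    (f f' : ℝ → E) (C : ℝ) (hC : 0 ≤ C) (F : Finset ℝ) :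
    ∀ a b : ℝ, a ≤ b → ContinuousOn f (Icc a b) →
    (∀ t ∈ Ioo a b, t ∉ F → HasDerivAt f (f' t) t ∧ ‖f' t‖ ≤ C) →
    ‖f b - f a‖ ≤ C * (b - a) := by
  induction F using Finset.induction_on with
  | empty =>
    intro a b hab hc hd
    exact lip_base f f' C a b hC hab hc
      (fun t ht => (hd t ht (by simp)).1) (fun t ht => (hd t ht (by simp)).2)
  | @insert w G hw ih =>
    intro a b hab hc hd
    by_cases hmem : w ∈ Ioo a b
    · have h1 : ‖f w - f a‖ ≤ C * (w - a) := by
        refine ih a w hmem.1.le (hc.mono (Icc_subset_Icc le_rfl hmem.2.le)) ?_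
        intro t ht htG
        refine hd t ⟨ht.1, ht.2.trans hmem.2⟩ ?_
        simp only [Finset.mem_insert, not_or]
        exact ⟨ne_of_lt ht.2, htG⟩
      have h2 : ‖f b - f w‖ ≤ C * (b - w) := by
        refine ih w b hmem.2.le (hc.mono (Icc_subset_Icc hmem.1.le le_rfl)) ?_
        intro t ht htG
        refine hd t ⟨hmem.1.trans ht.1, ht.2⟩ ?_
        simp only [Finset.mem_insert, not_or]
        exact ⟨(ne_of_gt ht.1), htG⟩
      calc ‖f b - f a‖ = ‖(f b - f w) + (f w - f a)‖ := by rw [sub_add_sub_cancel]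
        _ ≤ ‖f b - f w‖ + ‖f w - f a‖ := norm_add_le _ _
        _ ≤ C * (b - w) + C * (w - a) := add_le_add h2 h1
        _ = C * (b - a) := by ring
    · refine ih a b hab hc ?_
      intro t ht htG
      refine hd t ht ?_
      simp only [Finset.mem_insert, not_or]
      exact ⟨fun h => hmem (h ▸ ht), htG⟩

/-- Triangle-inequality step for angles, in `cos` form. -/
lemma ang_step {u v e : Plane} (hu : ‖u‖ = 1) (hv : ‖v‖ = 1) (he : ‖e‖ = 1)
    {A B : ℝ} (hA : 0 ≤ A) (hB : 0 ≤ B) (hAB : A + B ≤ π)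
    (h1 : Real.cos A ≤ ⟪e, u⟫) (h2 : Real.cos B ≤ ⟪u, v⟫) :
    Real.cos (A + B) ≤ ⟪e, v⟫ := by
  have ha1 : |(⟪e, u⟫ : ℝ)| ≤ 1 := by
    have := abs_real_inner_le_norm e u; rwa [hu, he, one_mul] at this
  have hb1 : |(⟪u, v⟫ : ℝ)| ≤ 1 := by
    have := abs_real_inner_le_norm u v; rwa [hu, hv, one_mul] at this
  obtain ⟨ha1l, ha1r⟩ := abs_le.1 ha1
  obtain ⟨hb1l, hb1r⟩ := abs_le.1 hb1
  set a : ℝ := ⟪e, u⟫ with ha_def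
  set b : ℝ := ⟪u, v⟫ with hb_def
  have key : a * b - Real.sqrt (1 - a ^ 2) * Real.sqrt (1 - b ^ 2) ≤ ⟪e, v⟫ := by
    set p : Plane := e - a • u with hp_def
    set q : Plane := v - b • u with hq_def
    have huu : (⟪u, u⟫ : ℝ) = 1 := by
      rw [real_inner_self_eq_norm_sq, hu]; norm_num
    have hue : (⟪u, e⟫ : ℝ) = a := by rw [ha_def, real_inner_comm]
    have huv : (⟪u, v⟫ : ℝ) = b := hb_def.symm
    have hve : (⟪v, e⟫ : ℝ)  = ⟪e, v⟫ := by rw [real_inner_comm]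
    have hee : (⟪e, e⟫ : ℝ) = 1 := by
      rw [real_inner_self_eq_norm_sq, he]; norm_num
    have hvv : (⟪v, v⟫ : ℝ) = 1 := by
      rw [real_inner_self_eq_norm_sq, hv]; norm_num
    have hpq : (⟪p, q⟫ : ℝ) = ⟪e, v⟫ - a * b := by
      simp only [hp_def, hq_def, inner_sub_left, inner_sub_right, real_inner_smul_left,
        real_inner_smul_right, huu, hue, huv, hve, hee, hvv]
      ring
    have hp2 : ‖p‖ ^ 2 = 1 - a ^ 2 := by
      rw [← real_inner_self_eq_norm_sq]
      simp only [hp_def, inner_sub_left, inner_sub_right, real_inner_smul_left,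
        real_inner_smul_right, huu, hue, hee]
      have hetu : (⟪e, u⟫ : ℝ) = a := ha_def.symm
      rw [hetu]; ring
    have hq2 : ‖q‖ ^ 2 = 1 - b ^ 2 := by
      rw [← real_inner_self_eq_norm_sq]
      simp only [hq_def, inner_sub_left, inner_sub_right, real_inner_smul_left,
        real_inner_smul_right, huu, huv, hvv]
      have hvtu : (⟪v, u⟫ : ℝ) = b := by rw [← huv, real_inner_comm]
      rw [hvtu]; ring
    have hpn : ‖p‖ = Real.sqrt (1 - a ^ 2) := by
      rw [← hp2, Real.sqrt_sq (norm_nonneg p)]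
    have hqn : ‖q‖ = Real.sqrt (1 - b ^ 2) := by
      rw [← hq2, Real.sqrt_sq (norm_nonneg q)]
    have habs := abs_real_inner_le_norm p q
    rw [hpn, hqn, hpq] at habs
    have h := abs_le.1 habs
    linarith [h.1]
  set α := Real.arccos a with hα_def
  set β := Real.arccos b with hβ_def
  have hαA : α ≤ A := by
    by_contra hcon
    push_neg at hcon
    have hc1 : Real.cos α < Real.cos A :=
      Real.strictAntiOn_cos ⟨hA, by linarith [Real.arccos_le_pi a]⟩
        ⟨Real.arccos_nonneg a, Real.arccos_le_pi a⟩ hcon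
    rw [hα_def, Real.cos_arccos ha1l ha1r] at hc1
    linarith
  have hβB : β ≤ B := by
    by_contra hcon
    push_neg at hcon
    have hc1 : Real.cos β < Real.cos B :=
      Real.strictAntiOn_cos ⟨hB, by linarith [Real.arccos_le_pi b]⟩
        ⟨Real.arccos_nonneg b, Real.arccos_le_pi b⟩ hcon
    rw [hβ_def, Real.cos_arccos hb1l hb1r] at hc1
    linarith
  have hstep : Real.cos (α + β) ≤ ⟪e, v⟫ := by
    rw [Real.cos_add, hα_def, hβ_def, Real.cos_arccos ha1l ha1r,
      Real.cos_arccos hb1l hb1r, Real.sin_arccos, Real.sin_arccos]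
    exact key
  have hmono : Real.cos (A + B) ≤ Real.cos (α + β) :=
    Real.cos_le_cos_of_nonneg_of_le_pi
      (add_nonneg (Real.arccos_nonneg a) (Real.arccos_nonneg b)) hAB
      (add_le_add hαA hβB)
  linarith

/-- The basic trigonometric step inequality. -/
lemma step_ineq {ε x : ℝ} (hε : 0 < ε) (hε1 : ε ≤ 1) (hx : 0 < x) (hx1 : x ≤ 1)
    (hx2 : x ^ 2 ≤ 2 * ε) : Real.cos ((1 + ε) * x) ≤ 1 - x ^ 2 / 2 := by
  set y := (1 + ε) * x / 2 with hy_def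
  have hy0 : 0 < y := by positivity
  have hy1 : y ≤ 1 := by nlinarith
  have hsin : y - y ^ 3 / 4 < Real.sin y := by
    have := Real.sin_gt_sub_cube hy0; nlinarith [pow_pos hy0 3]
  have hyx : y ≤ x := by rw [hy_def]; nlinarith
  have hy3 : y ^ 3 ≤ 2 * ε * x := by
    calc y ^ 3 ≤ x ^ 3 := pow_le_pow_left₀ hy0.le hyx 3
      _ = x * x ^ 2 := by ring
      _ ≤ x * (2 * ε) := by nlinarith
      _ = 2 * ε * x := by ring
  have hsin2 : x / 2 ≤ Real.sin y := by
    have hyeq : x / 2 + ε * x / 2 = y := by rw [hy_def]; ring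
    have : x / 2 ≤ y - y ^ 3 / 4 := by linarith
    linarith
  have hcos : Real.cos ((1 + ε) * x) = 1 - 2 * Real.sin y ^ 2 := by
    have h2y : (1 + ε) * x = 2 * y := by rw [hy_def]; ring
    rw [h2y, Real.cos_two_mul, ← Real.sin_sq_add_cos_sq y]
    ring
  rw [hcos]
  nlinarith

section Curve

variable {r s : ℝ} {σ σ' σ'' : ℝ → Plane}

/-- The tangent comparison lemma: the inner product of tangents is at least the
cosine of the rescaled parameter gap. -/
lemma tan_bound (hr : 0 < r)
    (hcont : ContinuousOn σ' (Icc 0 s)) (hnorm : ∀ t ∈ Icc (0:ℝ) s, ‖σ' t‖ = 1)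
    (F : Finset ℝ) (hF : ∀ t ∈ Icc (0:ℝ) s, t ∉ F → HasDerivAt σ' (σ'' t) t ∧ ‖σ'' t‖ ≤ 1 / r)
    (p q : ℝ) (hp : p ∈ Icc 0 s) (hq : q ∈ Icc (0:ℝ) s) (hpq : p ≤ q)
    (hgap : q - p ≤ π * r / 2) :
    Real.cos ((q - p) / r) ≤ ⟪σ' p, σ' q⟫ := by
  have hr' : (0:ℝ) < 1 / r := by positivity
  have lip : ∀ u ∈ Icc (0:ℝ) s, ∀ v ∈ Icc (0:ℝ) s, u ≤ v →
      ‖σ' v - σ' u‖ ≤ (1 / r) * (v - u) := by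
    intro u hu v hv huv
    refine lip_except σ' σ'' (1 / r) hr'.le F u v huv
      (hcont.mono (Icc_subset_Icc hu.1 hv.2)) ?_
    intro t ht htF
    exact hF t ⟨hu.1.trans ht.1.le, ht.2.le.trans hv.2⟩ htF
  set θ := (q - p) / r with hθ_def
  have hθ0 : 0 ≤ θ := div_nonneg (by linarith) hr.le
  have hθπ : θ ≤ π / 2 := by
    rw [hθ_def, div_le_iff₀ hr]
    linarith
  have main : ∀ ε : ℝ, 0 < ε → ε ≤ 1 → Real.cos ((1 + ε) * θ) ≤ ⟪σ' p, σ' q⟫ := by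
    intro ε hε hε1
    rcases eq_or_lt_of_le hpq with rfl | hlt
    · have : θ = 0 := by simp [hθ_def]
      rw [this, mul_zero, Real.cos_zero]
      have : ⟪σ' p, σ' p⟫ = 1 := by
        rw [real_inner_self_eq_norm_sq, hnorm p hp]; norm_num
      linarith [this.ge]
    have hθpos : 0 < θ := div_pos (by linarith) hr
    set d := min 1 (Real.sqrt (2 * ε)) with hd_def
    have hd0 : 0 < d := lt_min one_pos (Real.sqrt_pos.2 (by linarith))
    set n := ⌈θ / d⌉₊ with hn_def
    have hn0 : 0 < n := Nat.ceil_pos.2 (div_pos hθpos hd0)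
    have hn0' : (0:ℝ) < (n : ℝ) := Nat.cast_pos.2 hn0
    have hnd : θ / d ≤ (n : ℝ) := Nat.le_ceil _
    set x := θ / n with hx_def
    have hx0 : 0 < x := div_pos hθpos hn0'
    have hxd : x ≤ d := by
      rw [hx_def, div_le_iff₀ hn0']
      calc θ = (θ / d) * d := by field_simp
        _ ≤ (n : ℝ) * d := by nlinarith
        _ = d * n := by ring
    have hx1 : x ≤ 1 := hxd.trans (min_le_left _ _)
    have hx2 : x ^ 2 ≤ 2 * ε := by
      have h1 : x ≤ Real.sqrt (2 * ε) := hxd.trans (min_le_right _ _)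
      have h2 : Real.sqrt (2 * ε) ^ 2 = 2 * ε := Real.sq_sqrt (by linarith)
      nlinarith [Real.sqrt_nonneg (2 * ε)]
    set Δ := (q - p) / n with hΔ_def
    have hΔx : Δ = x * r := by
      rw [hΔ_def, hx_def, hθ_def]; field_simp
    have hΔ0 : 0 ≤ Δ := by
      rw [hΔx]; positivity
    have hq_eq : p + (n : ℝ) * Δ = q := by
      rw [hΔ_def]; field_simp; ring
    have hmem : ∀ i : ℕ, i ≤ n → p + (i : ℝ) * Δ ∈ Icc (0:ℝ) s := by
      intro i hi
      have hic : (i : ℝ) ≤ (n : ℝ) := Nat.cast_le.2 hi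
      constructor
      · have : 0 ≤ (i : ℝ) * Δ := by positivity
        linarith [hp.1]
      · have h1 : (i : ℝ) * Δ ≤ (n : ℝ) * Δ := by nlinarith
        have := hq.2
        linarith [hq_eq]
    have key : ∀ i : ℕ, i ≤ n →
        Real.cos ((1 + ε) * ((i : ℝ) * x)) ≤ ⟪σ' p, σ' (p + (i : ℝ) * Δ)⟫ := by
      intro i
      induction i with
      | zero =>
        intro _
        simp only [Nat.cast_zero, zero_mul, mul_zero, add_zero, Real.cos_zero]
        have : ⟪σ' p, σ' p⟫ = 1 := by
          rw [real_inner_self_eq_norm_sq, hnorm p hp]; norm_num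
        linarith [this.ge]
      | succ i ih =>
        intro hi
        have hi' : i ≤ n := Nat.le_of_succ_le hi
        have h1 := ih hi'
        have hm1 : p + (i : ℝ) * Δ ∈ Icc (0:ℝ) s := hmem i hi'
        have hm2 : p + ((i : ℝ) + 1) * Δ ∈ Icc (0:ℝ) s := by
          have := hmem (i + 1) hi
          push_cast at this
          exact this
        have hle : p + (i : ℝ) * Δ ≤ p + ((i : ℝ) + 1) * Δ := by nlinarith
        have hch : ‖σ' (p + ((i : ℝ) + 1) * Δ) - σ' (p + (i : ℝ) * Δ)‖ ≤ x := by
          have := lip _ hm1 _ hm2 hle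
          have heq : (1 / r) * ((p + ((i : ℝ) + 1) * Δ) - (p + (i : ℝ) * Δ)) = x := by
            rw [hΔx]; field_simp; ring
          rw [heq] at this
          exact this
        have hinner : Real.cos ((1 + ε) * x) ≤ ⟪σ' (p + (i : ℝ) * Δ), σ' (p + ((i : ℝ) + 1) * Δ)⟫ := by
          set u := σ' (p + (i : ℝ) * Δ)
          set v := σ' (p + ((i : ℝ) + 1) * Δ)
          have hun : ‖u‖ = 1 := hnorm _ hm1
          have hvn : ‖v‖ = 1 := hnorm _ hm2
          have hexp : ‖v - u‖ ^ 2 = 2 - 2 * ⟪u, v⟫ := by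
            rw [← real_inner_self_eq_norm_sq]
            simp only [inner_sub_left, inner_sub_right, real_inner_self_eq_norm_sq, hun, hvn]
            rw [real_inner_comm v u]
            ring
          have hst := step_ineq hε hε1 hx0 hx1 hx2
          nlinarith [hch, norm_nonneg (v - u), sq_nonneg ‖v - u‖]
        have hA0 : 0 ≤ (1 + ε) * ((i : ℝ) * x) := by positivity
        have hB0 : 0 ≤ (1 + ε) * x := by positivity
        have hABπ : (1 + ε) * ((i : ℝ) * x) + (1 + ε) * x ≤ π := by
          have hix : ((i : ℝ) + 1) * x ≤ (n : ℝ) * x := by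
            have : ((i : ℝ) + 1) ≤ (n : ℝ) := by exact_mod_cast hi
            nlinarith
          have hnx : (n : ℝ) * x = θ := by
            rw [hx_def]; field_simp
          have hpi : 0 < π := Real.pi_pos
          nlinarith [hθπ]
        have := ang_step (hnorm _ hm1) (hnorm _ hm2) (hnorm p hp) hA0 hB0 hABπ h1 hinner
        have harg : (1 + ε) * ((i : ℝ) * x) + (1 + ε) * x = (1 + ε) * (((i : ℝ) + 1) * x) := by
          ring
        rw [harg] at this
        push_cast
        exact this
    have hfin := key n le_rfl
    have hnx : (n : ℝ) * x = θ := by rw [hx_def]; field_simp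
    rw [hq_eq, hnx] at hfin
    exact hfin
  have hten : Filter.Tendsto (fun ε : ℝ => Real.cos ((1 + ε) * θ)) (nhdsWithin 0 (Ioi 0))
      (nhds (Real.cos θ)) := by
    have hco : Continuous fun ε : ℝ => Real.cos ((1 + ε) * θ) := by continuity
    have := hco.tendsto 0
    simp only [add_zero, one_mul] at this
    exact this.mono_left nhdsWithin_le_nhds
  refine le_of_tendsto hten ?_
  filter_upwards [Ioc_mem_nhdsGT_of_mem ⟨le_rfl, one_pos⟩] with ε hε
  exact main ε hε.1 hε.2

/-- The chord lower bound for κ-constrained curves. -/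
lemma chord_lb (hr : 0 < r)
    (hderiv : ∀ t ∈ Icc (0:ℝ) s, HasDerivAt σ (σ' t) t)
    (hcont : ContinuousOn σ' (Icc 0 s)) (hnorm : ∀ t ∈ Icc (0:ℝ) s, ‖σ' t‖ = 1)
    (F : Finset ℝ) (hF : ∀ t ∈ Icc (0:ℝ) s, t ∉ F → HasDerivAt σ' (σ'' t) t ∧ ‖σ'' t‖ ≤ 1 / r)
    (a b : ℝ) (ha : 0 ≤ a) (hab : a ≤ b) (hb : b ≤ s) (hl : b - a ≤ π * r) :
    2 * r * Real.sin ((b - a) / (2 * r)) ≤ dist (σ a) (σ b) := by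
  set m := (a + b) / 2 with hm_def
  have hm : m ∈ Icc (0:ℝ) s := ⟨by simp only [hm_def]; linarith, by simp only [hm_def]; linarith⟩
  set e := σ' m with he_def
  have hsub : Icc a b ⊆ Icc (0:ℝ) s := Icc_subset_Icc ha hb
  have hFTC : (∫ t in a..b, ⟪σ' t, e⟫) = ⟪σ b, e⟫ - ⟪σ a, e⟫ := by
    apply intervalIntegral.integral_eq_sub_of_hasDerivAt
    · intro t ht
      rw [uIcc_of_le hab] at ht
      have h := HasDerivAt.inner ℝ (hderiv t (hsub ht)) (hasDerivAt_const t e)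
      simpa using h
    · apply ContinuousOn.intervalIntegrable
      rw [uIcc_of_le hab]
      exact (hcont.mono hsub).inner continuousOn_const
  have hInt1 : IntervalIntegrable (fun t => ⟪σ' t, e⟫) MeasureTheory.volume a b := by
    apply ContinuousOn.intervalIntegrable
    rw [uIcc_of_le hab]
    exact (hcont.mono hsub).inner continuousOn_const
  have hInt2 : IntervalIntegrable (fun t => Real.cos ((t - m) / r)) MeasureTheory.volume a b := by
    apply Continuous.intervalIntegrable
    continuity
  have hpt : ∀ t ∈ Icc a b, Real.cos ((t - m) / r) ≤ ⟪σ' t, e⟫ := by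
    intro t ht
    rcases le_total t m with h | h
    · have hgap : m - t ≤ π * r / 2 := by
        have : m - t ≤ m - a := by linarith [ht.1]
        have h2 : m - a = (b - a) / 2 := by rw [hm_def]; ring
        linarith
      have := tan_bound hr hcont hnorm F hF t m (hsub ht) hm h hgap
      have hcoseq : (t - m) / r = -((m - t) / r) := by ring
      rw [hcoseq, Real.cos_neg, he_def]
      exact this
    · have hgap : t - m ≤ π * r / 2 := by
        have : t - m ≤ b - m := by linarith [ht.2]
        have h2 : b - m = (b - a) / 2 := by rw [hm_def]; ring
        linarith
      have := tan_bound hr hcont hnorm F hF m t hm (hsub ht) h hgap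
      rw [he_def]
      rwa [real_inner_comm] at this
  have hmono : (∫ t in a..b, Real.cos ((t - m) / r)) ≤ ∫ t in a..b, ⟪σ' t, e⟫ :=
    intervalIntegral.integral_mono_on hab hInt2 hInt1 hpt
  have hcalc : (∫ t in a..b, Real.cos ((t - m) / r)) = 2 * r * Real.sin ((b - a) / (2 * r)) := by
    have h1 : (∫ t in a..b, Real.cos ((t - m) / r))
        = ∫ t in (a - m)..(b - m), Real.cos (t / r) := by
      rw [← intervalIntegral.integral_comp_sub_right (fun u => Real.cos (u / r)) m]
    have h2 : (∫ t in (a - m)..(b - m), Real.cos (t / r))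
        = r • ∫ t in ((a - m) / r)..((b - m) / r), Real.cos t := by
      rw [intervalIntegral.integral_comp_div (c := r) (f := fun t => Real.cos t) hr.ne']
    rw [h1, h2, integral_cos]
    have h3 : (b - m) / r = (b - a) / (2 * r) := by
      rw [hm_def]; field_simp; ring
    have h4 : (a - m) / r = -((b - a) / (2 * r)) := by
      rw [hm_def]; field_simp; ring
    rw [h3, h4, Real.sin_neg]
    simp only [smul_eq_mul]
    ring
  have hnorm_e : ‖e‖ = 1 := hnorm m hm
  have hle : ⟪σ b - σ a, e⟫ ≤ ‖σ b - σ a‖ := by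
    have := real_inner_le_norm (σ b - σ a) e
    rwa [hnorm_e, mul_one] at this
  have hinner_sub : ⟪σ b - σ a, e⟫ = ⟪σ b, e⟫ - ⟪σ a, e⟫ := by
    rw [inner_sub_left]
  rw [dist_eq_norm, norm_sub_rev]
  linarith
end Curve

/-- Any two points in the intersection of the two closed balls are at distance
strictly less than `2 * r`, provided the centers are distinct. -/
lemma lens_diam {r : ℝ} (hr : 0 < r) {c₁ c₂ : Plane} (hcc : c₁ ≠ c₂)
    {p q : Plane} (hp : p ∈ closedBall c₁ r ∩ closedBall c₂ r)
    (hq : q ∈ closedBall c₁ r ∩ closedBall c₂ r) :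
    dist p q < 2 * r := by
  set m : Plane := (2⁻¹ : ℝ) • (c₁ + c₂) with hm_def
  have hD : 0 < ‖c₁ - c₂‖ := by
    rw [norm_pos_iff, sub_ne_zero]; exact hcc
  have hkey : ∀ z : Plane, z ∈ closedBall c₁ r ∩ closedBall c₂ r →
      ‖z - m‖ ^ 2 ≤ r ^ 2 - ‖c₁ - c₂‖ ^ 2 / 4 := by
    intro z hz
    have h1 : ‖z - c₁‖ ≤ r := by
      have := hz.1; rwa [mem_closedBall, dist_eq_norm] at this
    have h2 : ‖z - c₂‖ ≤ r := by
      have := hz.2; rwa [mem_closedBall, dist_eq_norm] at this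
    have hzm : z - m = (2⁻¹ : ℝ) • ((z - c₁) + (z - c₂)) := by
      rw [hm_def]; module
    have hpar : ‖(z - c₁) + (z - c₂)‖ ^ 2 + ‖(z - c₁) - (z - c₂)‖ ^ 2
        = 2 * (‖z - c₁‖ ^ 2 + ‖z - c₂‖ ^ 2) := by
      have := parallelogram_law_with_norm ℝ (z - c₁) (z - c₂)
      nlinarith [this]
    have hdiff : (z - c₁) - (z - c₂) = c₂ - c₁ := by abel
    rw [hdiff] at hpar
    have hnc : ‖c₂ - c₁‖ = ‖c₁ - c₂‖ := norm_sub_rev _ _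
    rw [hnc] at hpar
    have hnz : ‖z - m‖ = ‖(z - c₁) + (z - c₂)‖ / 2 := by
      rw [hzm, norm_smul]
      simp
      ring
    rw [hnz]
    have h1' : ‖z - c₁‖ ^ 2 ≤ r ^ 2 := by nlinarith [norm_nonneg (z - c₁)]
    have h2' : ‖z - c₂‖ ^ 2 ≤ r ^ 2 := by nlinarith [norm_nonneg (z - c₂)]
    nlinarith [hpar]
  have hp' := hkey p hp
  have hq' := hkey q hq
  have hppos := sq_nonneg ‖p - m‖
  have hqpos := sq_nonneg ‖q - m‖
  have hpm : ‖p - m‖ < r := by nlinarith [norm_nonneg (p - m)]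
  have hqm : ‖q - m‖ < r := by nlinarith [norm_nonneg (q - m)]
  calc dist p q ≤ dist p m + dist m q := dist_triangle p m q
    _ = ‖p - m‖ + ‖q - m‖ := by rw [dist_eq_norm, dist_eq_norm, norm_sub_rev m q]
    _ < 2 * r := by linarith

/-- For 0 < dist(x,y) < 2r, any (1/r)-constrained curve from x to y whose image
lies in the closed lens cl(I) is embedded (injective on the open parameter interval). -/
theorem curve_in_lens_embedded (r s : ℝ) (hr : 0 < r)
    (x y c₁ c₂ : Plane)
    (hd : 0 < dist x y) (hd2 : dist x y < 2 * r)
    (hc₁x : dist c₁ x = r) (hc₁y : dist c₁ y = r)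
    (hc₂x : dist c₂ x = r) (hc₂y : dist c₂ y = r)
    (hcc : c₁ ≠ c₂)
    (σ σ' σ'' : ℝ → Plane)
    (hσ : IsKConstrained (1 / r) s σ σ' σ'')
    (hx : σ 0 = x) (hy : σ s = y)
    (hlens : ∀ t ∈ Icc (0:ℝ) s,
        σ t ∈ closure (interior (closedBall c₁ r ∩ closedBall c₂ r))) :
    InjOn σ (Ioo 0 s) := by
  obtain ⟨hs0, hderiv, hcont, hnorm, F, hF⟩ := hσ
  have hlens' : ∀ t ∈ Icc (0:ℝ) s, σ t ∈ closedBall c₁ r ∩ closedBall c₂ r := by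
    intro t ht
    have hcl : closure (interior (closedBall c₁ r ∩ closedBall c₂ r))
        ⊆ closedBall c₁ r ∩ closedBall c₂ r :=
      closure_minimal interior_subset ((isClosed_closedBall).inter (isClosed_closedBall))
    exact hcl (hlens t ht)
  -- the key: no a < b in [0,s] with σ a = σ b
  have aux : ∀ a b : ℝ, a ∈ Icc (0:ℝ) s → b ∈ Icc (0:ℝ) s → a < b → σ a ≠ σ b := by
    intro a b ha hb hab heq
    rcases le_or_gt (b - a) (π * r) with hcase | hcase
    · -- short loop: chord bound positive
      have hch := chord_lb hr hderiv hcont hnorm F hF a b ha.1 hab.le hb.2 hcase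
      rw [heq] at hch
      rw [dist_self] at hch
      have hsin : 0 < Real.sin ((b - a) / (2 * r)) := by
        apply Real.sin_pos_of_pos_of_lt_pi
        · exact div_pos (by linarith) (by positivity)
        · have : (b - a) / (2 * r) ≤ π / 2 := by
            rw [div_le_iff₀ (by positivity)]
            nlinarith
          linarith [Real.pi_pos]
      nlinarith
    · -- long loop: two points at distance ≥ 2r inside the lens
      set u := a + π * r with hu_def
      have hu_le : u ≤ b := by rw [hu_def]; linarith
      have hπr : 0 < π * r := by positivity
      have hu_mem : u ∈ Icc (0:ℝ) s := by
        constructor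
        · rw [hu_def]; linarith [ha.1]
        · rw [hu_def]; linarith [hb.2]
      have hch := chord_lb hr hderiv hcont hnorm F hF a u ha.1
        (by rw [hu_def]; linarith) hu_mem.2 (by rw [hu_def]; linarith)
      have harg : (u - a) / (2 * r) = π / 2 := by
        rw [hu_def]; field_simp; ring
      rw [harg, Real.sin_pi_div_two, mul_one] at hch
      have hdlt := lens_diam hr hcc (hlens' a ha) (hlens' u hu_mem)
      linarith
  intro t₁ ht₁ t₂ ht₂ heq
  by_contra hne
  rcases lt_or_gt_of_ne hne with h | h
  · exact aux t₁ t₂ (Ioo_subset_Icc_self ht₁) (Ioo_subset_Icc_self ht₂) h heq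
  · exact aux t₂ t₁ (Ioo_subset_Icc_self ht₂) (Ioo_subset_Icc_self ht₁) h heq.symm
end
end

section
/- For 0 < d < 2r there is no κ-constrained curve (κ = 1/r) from x to y whose interior image lies entirely in E = int(D₁ ∪ D₂) \ cl(I), where D₁, D₂ are the two radius-r disks through x, y and I = int(D₁ ∩ D₂). -/
open Set Metric

set_option maxHeartbeats 2000000

noncomputable section

local notation "⟪" x ", " y "⟫" => @inner ℝ _ _ x y

/-- Monotonicity from nonnegative derivative off a finite set. -/
lemma mono_noexc {a b : ℝ} {f f' : ℝ → ℝ} (hc : ContinuousOn f (Icc a b))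
    (hd : ∀ x ∈ Ioo a b, HasDerivAt f (f' x) x ∧ 0 ≤ f' x) :
    MonotoneOn f (Icc a b) := by
  apply monotoneOn_of_deriv_nonneg (convex_Icc a b) hc
  · rw [interior_Icc]
    exact fun x hx => ((hd x hx).1.differentiableAt).differentiableWithinAt
  · rw [interior_Icc]
    intro x hx
    rw [(hd x hx).1.deriv]
    exact (hd x hx).2

lemma mono_exc : ∀ (n : ℕ) (F : Finset ℝ), F.card ≤ n → ∀ (a b : ℝ) (f f' : ℝ → ℝ),
    ContinuousOn f (Icc a b) →
    (∀ x ∈ Ioo a b, x ∉ F → HasDerivAt f (f' x) x ∧ 0 ≤ f' x) →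
    MonotoneOn f (Icc a b) := by
  intro n
  induction n with
  | zero =>
    intro F hF a b f f' hc hd
    rw [Nat.le_zero, Finset.card_eq_zero] at hF
    subst hF
    exact mono_noexc hc (fun x hx => hd x hx (by simp))
  | succ n ih =>
    intro F hF a b f f' hc hd
    by_cases hm : ∃ m ∈ F, m ∈ Ioo a b
    · obtain ⟨m, hmF, hma, hmb⟩ := hm
      have hcard : (F.erase m).card ≤ n := by
        have := Finset.card_erase_of_mem hmF
        omega
      have h1 : MonotoneOn f (Icc a m) := by
        apply ih (F.erase m) hcard a m f f'
          (hc.mono (Icc_subset_Icc le_rfl hmb.le))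
        intro x hx hxF
        refine hd x ⟨hx.1, hx.2.trans hmb⟩ (fun hxmem => hxF ?_)
        exact Finset.mem_erase.2 ⟨ne_of_lt hx.2, hxmem⟩
      have h2 : MonotoneOn f (Icc m b) := by
        apply ih (F.erase m) hcard m b f f'
          (hc.mono (Icc_subset_Icc hma.le le_rfl))
        intro x hx hxF
        refine hd x ⟨hma.trans hx.1, hx.2⟩ (fun hxmem => hxF ?_)
        exact Finset.mem_erase.2 ⟨(ne_of_lt hx.1).symm, hxmem⟩
      intro u hu v hv huv
      rcases le_total v m with h | h
      · exact h1 ⟨hu.1, huv.trans h⟩ ⟨hv.1, h⟩ huv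
      · rcases le_total u m with h' | h'
        · calc f u ≤ f m := h1 ⟨hu.1, h'⟩ ⟨hma.le, le_rfl⟩ h'
            _ ≤ f v := h2 ⟨le_rfl, hmb.le⟩ ⟨h, hv.2⟩ h
        · exact h2 ⟨h', hu.2⟩ ⟨h'.trans huv, hv.2⟩ huv
    · push_neg at hm
      exact mono_noexc hc (fun x hx => hd x hx (fun hxF => hm x hxF hx))

lemma maxPrinciple (r s : ℝ) (hr : 0 < r) (σ σ' σ'' : ℝ → Plane)
    (hσd : ∀ t ∈ Icc (0:ℝ) s, HasDerivAt σ (σ' t) t)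
    (hσ'c : ContinuousOn σ' (Icc 0 s))
    (hunit : ∀ t ∈ Icc (0:ℝ) s, ‖σ' t‖ = 1)
    (F : Finset ℝ)
    (hF : ∀ t ∈ Icc (0:ℝ) s, t ∉ F → HasDerivAt σ' (σ'' t) t ∧ ‖σ'' t‖ ≤ 1 / r)
    (c : Plane) (hball : ∀ t ∈ Icc (0:ℝ) s, ‖σ t - c‖ ≤ r) :
    ∀ t ∈ Icc (0:ℝ) s, ‖σ t - c‖ ^ 2 ≤ max (‖σ 0 - c‖ ^ 2) (‖σ s - c‖ ^ 2) := by
  set u : ℝ → ℝ := fun t => ⟪σ t - c, σ t - c⟫ with hu_def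
  set v : ℝ → ℝ := fun t => 2 * ⟪σ' t, σ t - c⟫ with hv_def
  have hunorm : ∀ t, u t = ‖σ t - c‖ ^ 2 := fun t => real_inner_self_eq_norm_sq _
  have hu : ∀ t ∈ Icc (0:ℝ) s, HasDerivAt u (v t) t := by
    intro t ht
    have h1 : HasDerivAt (fun τ => σ τ - c) (σ' t) t := (hσd t ht).sub_const c
    have h2 := h1.inner ℝ h1
    have h3 : v t = ⟪σ t - c, σ' t⟫ + ⟪σ' t, σ t - c⟫ := by
      simp only [hv_def]
      rw [real_inner_comm (σ' t) (σ t - c)]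
      ring
    rw [h3]
    exact h2
  have hσc : ContinuousOn σ (Icc 0 s) := fun t ht => (hσd t ht).continuousAt.continuousWithinAt
  have hvc : ContinuousOn v (Icc 0 s) := by
    apply ContinuousOn.mul continuousOn_const
    exact hσ'c.inner (hσc.sub continuousOn_const)
  -- v is monotone on [0,s]
  have hvmono : MonotoneOn v (Icc 0 s) := by
    apply mono_exc F.card F le_rfl 0 s v (fun t => 2 * (⟪σ' t, σ' t⟫ + ⟪σ'' t, σ t - c⟫)) hvc
    intro t ht htF
    have htIcc : t ∈ Icc (0:ℝ) s := Ioo_subset_Icc_self ht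
    obtain ⟨hD, hB⟩ := hF t htIcc htF
    constructor
    · have h1 : HasDerivAt (fun τ => σ τ - c) (σ' t) t := (hσd t htIcc).sub_const c
      have h2 := hD.inner ℝ h1
      exact h2.const_mul 2
    · have h3 : |⟪σ'' t, σ t - c⟫| ≤ ‖σ'' t‖ * ‖σ t - c‖ := abs_real_inner_le_norm _ _
      have h4 : ‖σ'' t‖ * ‖σ t - c‖ ≤ (1 / r) * r := by
        apply mul_le_mul hB (hball t htIcc) (norm_nonneg _)
        positivity
      have h5 : ⟪σ' t, σ' t⟫ = 1 := by
        rw [real_inner_self_eq_norm_sq, hunit t htIcc]; norm_num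
      rw [one_div_mul_cancel hr.ne'] at h4
      have h6 : -1 ≤ ⟪σ'' t, σ t - c⟫ := by
        have := neg_abs_le ⟪σ'' t, σ t - c⟫
        linarith
      rw [h5]
      linarith
  -- conclude
  intro t ht
  rcases eq_or_lt_of_le ht.1 with h0 | h0
  · rw [← h0]; exact le_max_left _ _
  rcases eq_or_lt_of_le ht.2 with h1 | h1
  · rw [h1]; exact le_max_right _ _
  rw [← hunorm]
  by_contra hcon
  push_neg at hcon
  rw [← hunorm 0, ← hunorm s] at hcon
  have hmax := max_lt_iff.mp hcon
  have huc : ContinuousOn u (Icc 0 s) :=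
    (hσc.sub continuousOn_const).inner (hσc.sub continuousOn_const)
  -- MVT on [0, t]
  obtain ⟨a, ha, hva⟩ := exists_hasDerivAt_eq_slope u v h0
    (huc.mono (Icc_subset_Icc le_rfl ht.2))
    (fun τ hτ => hu τ ⟨hτ.1.le, hτ.2.le.trans ht.2⟩)
  -- MVT on [t, s]
  obtain ⟨b, hb, hvb⟩ := exists_hasDerivAt_eq_slope u v h1
    (huc.mono (Icc_subset_Icc ht.1 le_rfl))
    (fun τ hτ => hu τ ⟨h0.le.trans hτ.1.le, hτ.2.le⟩)
  have hab : v a ≤ v b :=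
    hvmono ⟨ha.1.le, ha.2.le.trans ht.2⟩ ⟨h0.le.trans hb.1.le, hb.2.le⟩
      (ha.2.le.trans hb.1.le)
  have hs1 : (0:ℝ) < (u t - u 0) / (t - 0) := by
    apply div_pos (by linarith [hmax.1]) (by linarith)
  have hs2 : (u s - u t) / (s - t) < 0 := by
    apply div_neg_of_neg_of_pos (by linarith [hmax.2]) (by linarith)
  rw [hva] at hab
  rw [hvb] at hab
  linarith

/-- Key geometric lemma: the curve cannot stay (strictly) inside disk 1 and
(strictly) outside disk 2. -/
lemma crescent (r s : ℝ) (hr : 0 < r) (hs : 0 < s) (x y c₁ c₂ : Plane)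
    (h1x : ‖x - c₁‖ = r) (h1y : ‖y - c₁‖ = r) (h2x : ‖x - c₂‖ = r) (h2y : ‖y - c₂‖ = r)
    (hcc : c₁ ≠ c₂)
    (σ σ' σ'' : ℝ → Plane)
    (hσd : ∀ t ∈ Icc (0:ℝ) s, HasDerivAt σ (σ' t) t)
    (hσ'c : ContinuousOn σ' (Icc 0 s))
    (hunit : ∀ t ∈ Icc (0:ℝ) s, ‖σ' t‖ = 1)
    (F : Finset ℝ)
    (hF : ∀ t ∈ Icc (0:ℝ) s, t ∉ F → HasDerivAt σ' (σ'' t) t ∧ ‖σ'' t‖ ≤ 1 / r)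
    (hx : σ 0 = x) (hy : σ s = y)
    (hin : ∀ t ∈ Ioo (0:ℝ) s, ‖σ t - c₁‖ < r ∧ r < ‖σ t - c₂‖) : False := by
  set v : Plane := c₁ - c₂ with hv_def
  have hv0 : v ≠ 0 := sub_ne_zero.mpr hcc
  have hvn : 0 < ‖v‖ := norm_pos_iff.mpr hv0
  -- inner product identities at the tips
  have tip : ∀ p : Plane, ‖p - c₁‖ = r → ‖p - c₂‖ = r → ⟪p - c₁, v⟫ = -‖v‖ ^ 2 / 2 := by
    intro p hp1 hp2
    have hdecomp : p - c₂ = (p - c₁) + v := by rw [hv_def]; abel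
    have h := norm_add_sq_real (p - c₁) v
    rw [← hdecomp, hp1, hp2] at h
    linarith
  have hxv : ⟪x - c₁, v⟫ = -‖v‖ ^ 2 / 2 := tip x h1x h2x
  have hyv : ⟪y - c₁, v⟫ = -‖v‖ ^ 2 / 2 := tip y h1y h2y
  -- the moving center
  set c : ℝ → Plane := fun lam => c₂ + lam • v with hc_def
  have hc1 : c 1 = c₁ := by simp [hc_def, hv_def]
  have hc0 : c 0 = c₂ := by simp [hc_def]
  have hcsub : ∀ lam : ℝ, ∀ p : Plane, p - c lam = (p - c₁) + (1 - lam) • v := by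
    intro lam p
    simp only [hc_def, hv_def]
    module
  -- endpoint values
  have hend : ∀ lam : ℝ, ∀ p : Plane, ‖p - c₁‖ = r → ⟪p - c₁, v⟫ = -‖v‖ ^ 2 / 2 →
      ‖p - c lam‖ ^ 2 = r ^ 2 - lam * (1 - lam) * ‖v‖ ^ 2 := by
    intro lam p hp hpv
    rw [hcsub lam p, norm_add_sq_real, hp, real_inner_smul_right, hpv, norm_smul,
      Real.norm_eq_abs, mul_pow, sq_abs]
    ring
  -- the set G
  set G : Set ℝ := {lam | lam ∈ Icc (0:ℝ) 1 ∧ ∀ t ∈ Icc 0 s, ‖σ t - c lam‖ ≤ r} with hG_def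
  have hmem1 : ∀ t ∈ Icc (0:ℝ) s, ‖σ t - c₁‖ ≤ r := by
    intro t ht
    rcases eq_or_lt_of_le ht.1 with h0 | h0
    · rw [← h0, hx, h1x]
    rcases eq_or_lt_of_le ht.2 with h1 | h1
    · rw [h1, hy, h1y]
    exact (hin t ⟨h0, h1⟩).1.le
  have h1G : (1:ℝ) ∈ G := by
    refine ⟨⟨zero_le_one, le_rfl⟩, ?_⟩
    rw [hc1]; exact hmem1
  have hGne : G.Nonempty := ⟨1, h1G⟩
  have hGbdd : BddBelow G := ⟨0, fun lam hlam => hlam.1.1⟩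
  have hGclosed : IsClosed G := by
    have : G = Icc 0 1 ∩ ⋂ t ∈ Icc (0:ℝ) s, {lam : ℝ | ‖σ t - c lam‖ ≤ r} := by
      ext lam
      simp only [hG_def, mem_setOf_eq, mem_inter_iff, mem_iInter, mem_Icc]
    rw [this]
    refine isClosed_Icc.inter (isClosed_biInter fun t ht => ?_)
    have hcont : Continuous fun lam : ℝ => ‖σ t - c lam‖ := by
      apply Continuous.norm
      exact continuous_const.sub (continuous_const.add (continuous_id.smul continuous_const))
    exact isClosed_le hcont continuous_const
  set lam0 : ℝ := sInf G with hlam0_def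
  have hlam0G : lam0 ∈ G := hGclosed.csInf_mem hGne hGbdd
  have hhalf : s / 2 ∈ Ioo (0:ℝ) s := ⟨by linarith, by linarith⟩
  -- lam0 cannot be 0
  have hlam0ne : lam0 ≠ 0 := by
    intro h0
    have := hlam0G.2 (s/2) ⟨hhalf.1.le, hhalf.2.le⟩
    rw [h0, hc0] at this
    exact absurd this (not_le.mpr (hin (s/2) hhalf).2)
  have hlam0pos : 0 < lam0 := lt_of_le_of_ne hlam0G.1.1 (Ne.symm hlam0ne)
  -- helper: moving the center a bit
  have hmove : ∀ lam mu : ℝ, ‖c lam - c mu‖ = |lam - mu| * ‖v‖ := by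
    intro lam mu
    have : c lam - c mu = (lam - mu) • v := by simp only [hc_def]; module
    rw [this, norm_smul, Real.norm_eq_abs]
  rcases eq_or_lt_of_le hlam0G.1.2 with hlam1 | hlam1
  · -- lam0 = 1 : push below 1 using strictness
    -- Lipschitz bounds for σ
    have hlipx : ∀ t ∈ Icc (0:ℝ) s, ‖σ t - x‖ ≤ t := by
      intro t ht
      have := norm_image_sub_le_of_norm_deriv_le_segment'
        (f := σ) (f' := σ') (a := (0:ℝ)) (b := s) (C := 1)
        (fun τ hτ => (hσd τ hτ).hasDerivWithinAt)
        (fun τ hτ => le_of_eq (hunit τ (Ico_subset_Icc_self hτ))) t ht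
      rw [hx] at this; linarith
    have hlipy : ∀ t ∈ Icc (0:ℝ) s, ‖σ t - y‖ ≤ s - t := by
      intro t ht
      have := norm_image_sub_le_of_norm_deriv_le_segment'
        (f := σ) (f' := σ') (a := t) (b := s) (C := 1)
        (fun τ hτ => (hσd τ ⟨ht.1.trans hτ.1, hτ.2⟩).hasDerivWithinAt)
        (fun τ hτ => le_of_eq (hunit τ ⟨ht.1.trans hτ.1, hτ.2.le⟩)) s
        ⟨ht.2, le_rfl⟩
      rw [hy] at this
      rw [← norm_neg]
      simpa [neg_sub] using this
    set a : ℝ := min (s/2) (‖v‖/4) with ha_def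
    have ha0 : 0 < a := lt_min (by linarith) (by positivity)
    have has : a ≤ s/2 := min_le_left _ _
    have hav : a ≤ ‖v‖/4 := min_le_right _ _
    -- tip estimate
    have htip : ∀ p t, ⟪p - c₁, v⟫ = -‖v‖ ^ 2 / 2 → ‖σ t - p‖ ≤ a →
        ⟪σ t - c₁, v⟫ ≤ -‖v‖ ^ 2 / 4 := by
      intro p t hpv hdist
      have hsplit : σ t - c₁ = (σ t - p) + (p - c₁) := by abel
      rw [hsplit, inner_add_left, hpv]
      have h1 : ⟪σ t - p, v⟫ ≤ ‖σ t - p‖ * ‖v‖ := real_inner_le_norm _ _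
      have h2 : ‖σ t - p‖ * ‖v‖ ≤ a * ‖v‖ :=
        mul_le_mul_of_nonneg_right hdist (norm_nonneg _)
      have h3 : a * ‖v‖ ≤ ‖v‖/4 * ‖v‖ := mul_le_mul_of_nonneg_right hav (norm_nonneg _)
      nlinarith [sq_nonneg ‖v‖]
    -- middle compact bound
    have hK : Icc a (s - a) ⊆ Ioo (0:ℝ) s := fun t ht => ⟨lt_of_lt_of_le ha0 ht.1, by
      have := ht.2; linarith⟩
    have hKne : (Icc a (s - a)).Nonempty := ⟨a, le_rfl, by linarith⟩
    have hσc : ContinuousOn σ (Icc 0 s) := fun t ht => (hσd t ht).continuousAt.continuousWithinAt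
    have hKsub : Icc a (s - a) ⊆ Icc (0:ℝ) s := fun t ht =>
      ⟨ha0.le.trans ht.1, by have := ht.2; linarith⟩
    obtain ⟨t₀, ht₀K, ht₀max⟩ := (isCompact_Icc).exists_isMaxOn hKne
      (show ContinuousOn (fun t => ‖σ t - c₁‖) (Icc a (s - a)) from
        ((hσc.mono hKsub).sub continuousOn_const).norm)
    set dlt : ℝ := r - ‖σ t₀ - c₁‖ with hdlt_def
    have hdlt0 : 0 < dlt := sub_pos.mpr (hin t₀ (hK ht₀K)).1
    have hmid : ∀ t ∈ Icc a (s - a), ‖σ t - c₁‖ ≤ r - dlt := by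
      intro t ht
      have := ht₀max ht
      simp only [mem_setOf_eq] at this
      linarith
    obtain ⟨eps, heps0, heps2, hepsd⟩ : ∃ eps : ℝ, 0 < eps ∧ eps ≤ 1/2 ∧ eps * ‖v‖ ≤ dlt := by
      refine ⟨min (1/2) (dlt / ‖v‖), lt_min (by norm_num) (div_pos hdlt0 hvn),
        min_le_left _ _, ?_⟩
      calc min (1/2) (dlt / ‖v‖) * ‖v‖ ≤ (dlt / ‖v‖) * ‖v‖ :=
            mul_le_mul_of_nonneg_right (min_le_right _ _) (norm_nonneg _)
        _ = dlt := div_mul_cancel₀ dlt hvn.ne'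
    have hmemG : (1 - eps) ∈ G := by
      refine ⟨⟨by linarith, by linarith⟩, ?_⟩
      intro t ht
      have hdecomp : σ t - c (1 - eps) = (σ t - c₁) + eps • v := by
        rw [hcsub (1 - eps) (σ t)]
        module
      by_cases hta : t ≤ a ∨ s - a ≤ t
      · -- near a tip
        have hinner : ⟪σ t - c₁, v⟫ ≤ -‖v‖ ^ 2 / 4 := by
          rcases hta with hta | hta
          · exact htip x t hxv ((hlipx t ht).trans hta)
          · exact htip y t hyv (by have := hlipy t ht; linarith)
        have hb1 : ‖σ t - c₁‖ ≤ r := hmem1 t ht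
        have hsq : ‖σ t - c (1 - eps)‖ ^ 2 ≤ r ^ 2 := by
          rw [hdecomp, norm_add_sq_real, real_inner_smul_right, norm_smul,
            Real.norm_eq_abs, mul_pow, sq_abs]
          have he : eps ^ 2 ≤ eps / 2 := by nlinarith
          have hv4 : eps ^ 2 * ‖v‖ ^ 2 ≤ eps / 2 * ‖v‖ ^ 2 :=
            mul_le_mul_of_nonneg_right he (sq_nonneg _)
          have e1 : ‖σ t - c₁‖ ^ 2 ≤ r ^ 2 := by nlinarith [norm_nonneg (σ t - c₁)]
          have e2 : eps * ⟪σ t - c₁, v⟫ ≤ eps * (-‖v‖ ^ 2 / 4) :=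
            mul_le_mul_of_nonneg_left hinner heps0.le
          linarith
        nlinarith [norm_nonneg (σ t - c (1 - eps)), hr]
      · -- middle
        push_neg at hta
        have htK : t ∈ Icc a (s - a) := ⟨hta.1.le, hta.2.le⟩
        calc ‖σ t - c (1 - eps)‖ = ‖(σ t - c₁) + eps • v‖ := by rw [hdecomp]
          _ ≤ ‖σ t - c₁‖ + ‖eps • v‖ := norm_add_le _ _
          _ ≤ (r - dlt) + eps * ‖v‖ := by
              have := hmid t htK
              rw [norm_smul, Real.norm_eq_abs, abs_of_pos heps0]
              linarith
          _ ≤ r := by linarith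
    have : lam0 ≤ 1 - eps := csInf_le hGbdd hmemG
    rw [← hlam1] at this
    linarith
  · -- 0 < lam0 < 1 : max principle gives uniform slack
    have hball : ∀ t ∈ Icc (0:ℝ) s, ‖σ t - c lam0‖ ≤ r := hlam0G.2
    have hmp := maxPrinciple r s hr σ σ' σ'' hσd hσ'c hunit F hF (c lam0) hball
    set M : ℝ := r ^ 2 - lam0 * (1 - lam0) * ‖v‖ ^ 2 with hM_def
    have hMx : ‖σ 0 - c lam0‖ ^ 2 = M := by rw [hx]; exact hend lam0 x h1x hxv
    have hMy : ‖σ s - c lam0‖ ^ 2 = M := by rw [hy]; exact hend lam0 y h1y hyv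
    have hM0 : 0 ≤ M := by rw [← hMx]; positivity
    have hMr : M < r ^ 2 := by
      have : 0 < lam0 * (1 - lam0) * ‖v‖ ^ 2 := by
        apply mul_pos (mul_pos hlam0pos (by linarith)) (by positivity)
      linarith
    have hsqrtM : Real.sqrt M < r := by
      rw [show r = Real.sqrt (r ^ 2) by rw [Real.sqrt_sq hr.le]]
      exact Real.sqrt_lt_sqrt hM0 hMr
    have hballM : ∀ t ∈ Icc (0:ℝ) s, ‖σ t - c lam0‖ ≤ Real.sqrt M := by
      intro t ht
      have := hmp t ht
      rw [hMx, hMy, max_self] at this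
      have h := Real.sqrt_le_sqrt this
      rwa [Real.sqrt_sq (norm_nonneg _)] at h
    obtain ⟨eta, heta0, hetal, hetav⟩ :
        ∃ eta : ℝ, 0 < eta ∧ eta ≤ lam0 ∧ eta * ‖v‖ ≤ r - Real.sqrt M := by
      refine ⟨min lam0 ((r - Real.sqrt M) / ‖v‖),
        lt_min hlam0pos (div_pos (by linarith) hvn), min_le_left _ _, ?_⟩
      calc min lam0 ((r - Real.sqrt M) / ‖v‖) * ‖v‖ ≤ ((r - Real.sqrt M) / ‖v‖) * ‖v‖ :=
            mul_le_mul_of_nonneg_right (min_le_right _ _) (norm_nonneg _)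
        _ = r - Real.sqrt M := div_mul_cancel₀ _ hvn.ne'
    have hmemG : (lam0 - eta) ∈ G := by
      refine ⟨⟨by linarith, by linarith [hlam0G.1.2]⟩, ?_⟩
      intro t ht
      calc ‖σ t - c (lam0 - eta)‖
          ≤ ‖σ t - c lam0‖ + ‖c lam0 - c (lam0 - eta)‖ := by
            have : σ t - c (lam0 - eta) = (σ t - c lam0) + (c lam0 - c (lam0 - eta)) := by abel
            rw [this]; exact norm_add_le _ _
        _ ≤ Real.sqrt M + eta * ‖v‖ := by
            rw [hmove]
            have : |lam0 - (lam0 - eta)| = eta := by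
              rw [abs_of_pos (by linarith : (0:ℝ) < lam0 - (lam0 - eta))]; ring
            rw [this]
            exact add_le_add (hballM t ht) le_rfl
        _ ≤ r := by linarith
    have : lam0 ≤ lam0 - eta := csInf_le hGbdd hmemG
    linarith

/-- For 0 < dist(x,y) < 2r, no (1/r)-constrained curve from x to y can have its
interior image inside E = int(D₁ ∪ D₂) \ cl(I). -/
theorem no_curve_in_E (r s : ℝ) (hr : 0 < r)
    (x y c₁ c₂ : Plane)
    (hd : 0 < dist x y) (hd2 : dist x y < 2 * r)
    (hc₁x : dist c₁ x = r) (hc₁y : dist c₁ y = r)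
    (hc₂x : dist c₂ x = r) (hc₂y : dist c₂ y = r)
    (hcc : c₁ ≠ c₂)
    (σ σ' σ'' : ℝ → Plane)
    (hσ : IsKConstrained (1 / r) s σ σ' σ'')
    (hx : σ 0 = x) (hy : σ s = y)
    (hE : ∀ t ∈ Ioo (0:ℝ) s,
        σ t ∈ interior (closedBall c₁ r ∪ closedBall c₂ r) \
              closure (interior (closedBall c₁ r ∩ closedBall c₂ r))) :
    False := by
  obtain ⟨hs0, hσd, hσ'c, hunit, F, hF⟩ := hσ
  -- s > 0
  have hs : 0 < s := by
    rcases eq_or_lt_of_le hs0 with h | h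
    · exfalso
      rw [← h] at hy
      rw [hy] at hx
      rw [hx] at hd
      simp at hd
    · exact h
  -- norms of endpoints
  have h1x : ‖x - c₁‖ = r := by rw [← dist_eq_norm, dist_comm]; exact hc₁x
  have h1y : ‖y - c₁‖ = r := by rw [← dist_eq_norm, dist_comm]; exact hc₁y
  have h2x : ‖x - c₂‖ = r := by rw [← dist_eq_norm, dist_comm]; exact hc₂x
  have h2y : ‖y - c₂‖ = r := by rw [← dist_eq_norm, dist_comm]; exact hc₂y
  -- the midpoint is in the interior of the lens
  set m : Plane := midpoint ℝ x y with hm_def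
  have hmid : ∀ c : Plane, dist c x = r → dist c y = r → dist m c < r := by
    intro c hcx hcy
    have hx' : ‖x - c‖ = r := by rw [← dist_eq_norm, dist_comm]; exact hcx
    have hy' : ‖y - c‖ = r := by rw [← dist_eq_norm, dist_comm]; exact hcy
    have hsub : m - c = (2:ℝ)⁻¹ • ((x - c) + (y - c)) := by
      have hm2 : m = (2:ℝ)⁻¹ • (x + y) := by
        rw [hm_def, midpoint_eq_smul_add, invOf_eq_inv]
      rw [hm2]
      module
    have hxy : ‖x - y‖ = dist x y := (dist_eq_norm x y).symm
    have hexp : ‖m - c‖ ^ 2 = r ^ 2 - ‖x - y‖ ^ 2 / 4 := by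
      have h1 : ‖(x - c) + (y - c)‖ ^ 2
          = ‖x - c‖ ^ 2 + 2 * ⟪x - c, y - c⟫ + ‖y - c‖ ^ 2 := norm_add_sq_real _ _
      have h2 : ‖(x - c) - (y - c)‖ ^ 2
          = ‖x - c‖ ^ 2 - 2 * ⟪x - c, y - c⟫ + ‖y - c‖ ^ 2 := norm_sub_sq_real _ _
      have h3 : (x - c) - (y - c) = x - y := by abel
      rw [h3] at h2
      rw [hsub, norm_smul]
      have : ‖((2:ℝ)⁻¹ : ℝ)‖ = (2:ℝ)⁻¹ := by norm_num
      rw [this, mul_pow, h1, hx', hy']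
      rw [hx', hy'] at h2
      nlinarith [h2]
    have : ‖m - c‖ ^ 2 < r ^ 2 := by
      rw [hexp, hxy]
      nlinarith [hd]
    rw [dist_eq_norm]
    nlinarith [norm_nonneg (m - c), hr]
  have hmint : m ∈ interior (closedBall c₁ r ∩ closedBall c₂ r) := by
    apply interior_maximal (t := ball c₁ r ∩ ball c₂ r)
    · exact inter_subset_inter ball_subset_closedBall ball_subset_closedBall
    · exact isOpen_ball.inter isOpen_ball
    · exact ⟨mem_ball.2 (hmid c₁ hc₁x hc₁y), mem_ball.2 (hmid c₂ hc₂x hc₂y)⟩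
  -- closed lens is in the closure of its interior
  have hlens : ∀ p : Plane, dist p c₁ ≤ r → dist p c₂ ≤ r →
      p ∈ closure (interior (closedBall c₁ r ∩ closedBall c₂ r)) := by
    intro p hp1 hp2
    have hK : Convex ℝ (closedBall c₁ r ∩ closedBall c₂ r) :=
      (convex_closedBall _ _).inter (convex_closedBall _ _)
    have hpK : p ∈ closedBall c₁ r ∩ closedBall c₂ r := ⟨mem_closedBall.2 hp1, mem_closedBall.2 hp2⟩
    have hseq : ∀ n : ℕ, p + ((1:ℝ)/(n+1)) • (m - p)
        ∈ interior (closedBall c₁ r ∩ closedBall c₂ r) := by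
      intro n
      apply hK.add_smul_sub_mem_interior hpK hmint
      constructor
      · positivity
      · rw [div_le_one (by positivity)]
        linarith [Nat.cast_nonneg (α := ℝ) n]
    have htend : Filter.Tendsto (fun n : ℕ => p + ((1:ℝ)/(n+1)) • (m - p))
        Filter.atTop (nhds p) := by
      have h0 : Filter.Tendsto (fun n : ℕ => (1:ℝ)/(n+1)) Filter.atTop (nhds 0) :=
        tendsto_one_div_add_atTop_nhds_zero_nat
      have := (h0.smul_const (m - p)).const_add p
      simpa using this
    exact mem_closure_of_tendsto htend (Filter.Eventually.of_forall hseq)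
  -- a boundary point of disk 1 outside disk 2 is not in the interior of the union
  have hbdry : ∀ cA cB : Plane, ∀ p : Plane, dist p cA = r → r < dist p cB →
      p ∉ interior (closedBall cA r ∪ closedBall cB r) := by
    intro cA cB p hp1 hp2 hmem
    obtain ⟨ε, hε, hball⟩ := Metric.mem_nhds_iff.mp (mem_interior_iff_mem_nhds.mp hmem)
    set τ : ℝ := min (ε/2) ((dist p cB - r)/2) with hτ_def
    have hτ0 : 0 < τ := lt_min (by linarith) (by linarith)
    set q : Plane := p + (τ/r) • (p - cA) with hq_def
    have hqp : dist q p = τ := by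
      rw [dist_eq_norm, hq_def]
      have : p + (τ/r) • (p - cA) - p = (τ/r) • (p - cA) := by abel
      rw [this, norm_smul, Real.norm_eq_abs, abs_of_pos (by positivity)]
      rw [show ‖p - cA‖ = r by rw [← dist_eq_norm]; exact hp1]
      field_simp
    have hq1 : r < dist q cA := by
      have hdecomp : q - cA = (1 + τ/r) • (p - cA) := by
        rw [hq_def]; module
      rw [dist_eq_norm, hdecomp, norm_smul, Real.norm_eq_abs,
        abs_of_pos (by positivity : (0:ℝ) < 1 + τ/r)]
      rw [show ‖p - cA‖ = r by rw [← dist_eq_norm]; exact hp1]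
      have : (1 + τ/r) * r = r + τ := by field_simp
      rw [this]
      linarith
    have hq2 : r < dist q cB := by
      have hτ' : τ ≤ (dist p cB - r)/2 := min_le_right _ _
      have h2 := dist_triangle p q cB
      rw [dist_comm q p] at hqp
      rw [hqp] at h2
      linarith
    have hq3 : q ∈ ball p ε := by
      rw [mem_ball, hqp]
      have : τ ≤ ε/2 := min_le_left _ _
      linarith
    rcases hball hq3 with h | h
    · rw [mem_closedBall] at h; linarith
    · rw [mem_closedBall] at h; linarith
  -- dichotomy on (0, s)
  have hdich : ∀ t ∈ Ioo (0:ℝ) s,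
      (dist (σ t) c₁ < r ∧ r < dist (σ t) c₂) ∨ (dist (σ t) c₂ < r ∧ r < dist (σ t) c₁) := by
    intro t ht
    obtain ⟨hI, hC⟩ := hE t ht
    have hU : σ t ∈ closedBall c₁ r ∪ closedBall c₂ r := interior_subset hI
    have hnboth : ¬ (dist (σ t) c₁ ≤ r ∧ dist (σ t) c₂ ≤ r) := by
      rintro ⟨h1, h2⟩
      exact hC (hlens (σ t) h1 h2)
    rcases hU with h | h
    · rw [mem_closedBall] at h
      have h2 : r < dist (σ t) c₂ := by
        by_contra h2
        exact hnboth ⟨h, le_of_not_gt h2⟩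
      left
      refine ⟨?_, h2⟩
      rcases eq_or_lt_of_le h with he | he
      · exact absurd hI (hbdry c₁ c₂ (σ t) he h2)
      · exact he
    · rw [mem_closedBall] at h
      have h1 : r < dist (σ t) c₁ := by
        by_contra h1
        exact hnboth ⟨le_of_not_gt h1, h⟩
      right
      refine ⟨?_, h1⟩
      rcases eq_or_lt_of_le h with he | he
      · exfalso
        rw [union_comm] at hI
        exact hbdry c₂ c₁ (σ t) he h1 hI
      · exact he
  -- the sign of dist to c₂ minus dist to c₁ is constant on (0, s)
  have hσc : ContinuousOn σ (Icc 0 s) := fun t ht => (hσd t ht).continuousAt.continuousWithinAt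
  set g : ℝ → ℝ := fun t => dist (σ t) c₂ - dist (σ t) c₁ with hg_def
  have hgc : ContinuousOn g (Icc 0 s) := by
    apply ContinuousOn.sub
    · exact (continuous_id.dist continuous_const).comp_continuousOn hσc
    · exact (continuous_id.dist continuous_const).comp_continuousOn hσc
  have hgne : ∀ t ∈ Ioo (0:ℝ) s, g t ≠ 0 := by
    intro t ht
    rcases hdich t ht with ⟨ha, hb⟩ | ⟨ha, hb⟩
    · simp only [hg_def]; intro h; rw [sub_eq_zero] at h; linarith
    · simp only [hg_def]; intro h; rw [sub_eq_zero] at h; linarith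
  have hIooIcc : Ioo (0:ℝ) s ⊆ Icc 0 s := Ioo_subset_Icc_self
  by_cases hall : ∀ t ∈ Ioo (0:ℝ) s, 0 < g t
  · -- curve in crescent 1
    apply crescent r s hr hs x y c₁ c₂ h1x h1y h2x h2y hcc σ σ' σ'' hσd hσ'c hunit F hF hx hy
    intro t ht
    rcases hdich t ht with ⟨ha, hb⟩ | ⟨ha, hb⟩
    · rw [← dist_eq_norm, ← dist_eq_norm]; exact ⟨ha, hb⟩
    · exfalso
      have := hall t ht
      simp only [hg_def] at this
      linarith
  · push_neg at hall
    obtain ⟨t₁, ht₁, hgt₁⟩ := hall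
    have hgt₁' : g t₁ < 0 := lt_of_le_of_ne hgt₁ (hgne t₁ ht₁)
    have hall2 : ∀ t ∈ Ioo (0:ℝ) s, g t < 0 := by
      intro t₂ ht₂
      by_contra hpos
      have hgt₂ : 0 < g t₂ := lt_of_le_of_ne (le_of_not_gt hpos) (Ne.symm (hgne t₂ ht₂))
      rcases le_total t₁ t₂ with hle | hle
      · have hsub : Icc t₁ t₂ ⊆ Ioo (0:ℝ) s := fun τ hτ =>
          ⟨lt_of_lt_of_le ht₁.1 hτ.1, lt_of_le_of_lt hτ.2 ht₂.2⟩
        obtain ⟨t₀, ht₀, hgt₀⟩ := intermediate_value_Icc hle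
          (hgc.mono (hsub.trans hIooIcc)) (show (0:ℝ) ∈ Icc (g t₁) (g t₂) from ⟨hgt₁'.le, hgt₂.le⟩)
        exact hgne t₀ (hsub ht₀) hgt₀
      · have hsub : Icc t₂ t₁ ⊆ Ioo (0:ℝ) s := fun τ hτ =>
          ⟨lt_of_lt_of_le ht₂.1 hτ.1, lt_of_le_of_lt hτ.2 ht₁.2⟩
        obtain ⟨t₀, ht₀, hgt₀⟩ := intermediate_value_Icc' hle
          (hgc.mono (hsub.trans hIooIcc)) (show (0:ℝ) ∈ Icc (g t₁) (g t₂) from ⟨hgt₁'.le, hgt₂.le⟩)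
        exact hgne t₀ (hsub ht₀) hgt₀
    -- curve in crescent 2
    apply crescent r s hr hs x y c₂ c₁ h2x h2y h1x h1y hcc.symm σ σ' σ'' hσd hσ'c hunit F hF hx hy
    intro t ht
    rcases hdich t ht with ⟨ha, hb⟩ | ⟨ha, hb⟩
    · exfalso
      have := hall2 t ht
      simp only [hg_def] at this
      linarith
    · rw [← dist_eq_norm, ← dist_eq_norm]; exact ⟨ha, hb⟩
end
end
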